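/- arXiv:1108.0239 — 7 statements merged into one kernel-verified Lean document; each statement's English description precedes it below -/
import Mathlib

section
/- Let A ∈ ℝ^{d×d} with ρ(A) < 1 and suppose D ∈ ℝ^{d×d} is symmetric positive-definite with D - AᵀDA positive semidefinite. Then D - (A^d)ᵀ D A^d is positive-definite. -/
open Matrix Filter
open scoped ENNReal

noncomputable def Pnorm {d : ℕ} (P : Matrix (Fin d) (Fin d) ℝ) (x : Fin d → ℝ) : ℝ :=
  Real.sqrt (x ⬝ᵥ P.mulVec x)

noncomputable def PopNorm {d : ℕ} (P A : Matrix (Fin d) (Fin d) ℝ) : ℝ :=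
  sSup ((fun x => Pnorm P (A.mulVec x)) '' {x | Pnorm P x = 1})

noncomputable def PcoNorm {d : ℕ} (P A : Matrix (Fin d) (Fin d) ℝ) : ℝ :=
  sInf ((fun x => Pnorm P (A.mulVec x)) '' {x | Pnorm P x = 1})

noncomputable def specRad {d : ℕ} (A : Matrix (Fin d) (Fin d) ℝ) : ℝ≥0∞ :=
  spectralRadius ℂ (A.map Complex.ofReal)

def prodsW {d K : ℕ} (S : Fin K → Matrix (Fin d) (Fin d) ℝ) (σ : ℕ → Fin K) :
    ℕ → Matrix (Fin d) (Fin d) ℝ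
  | 0 => 1
  | n + 1 => S (σ n) * prodsW S σ n

def omegaSet {d K : ℕ} (S : Fin K → Matrix (Fin d) (Fin d) ℝ) (σ : ℕ → Fin K) :
    Set (Matrix (Fin d) (Fin d) ℝ) :=
  {M | ∃ φ : ℕ → ℕ, StrictMono φ ∧ Tendsto (fun i => prodsW S σ (φ i)) atTop (nhds M)}


section Helper

attribute [local instance] Matrix.linftyOpNormedRing Matrix.linftyOpNormedAlgebra

lemma myPowTendsto {𝔸 : Type*} [NormedRing 𝔸] [NormedAlgebra ℂ 𝔸] [CompleteSpace 𝔸]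
    (a : 𝔸) (h : spectralRadius ℂ a < 1) :
    Tendsto (fun n => ‖a ^ n‖) atTop (nhds 0) := by
  obtain ⟨c, hc1, hc2⟩ := ENNReal.lt_iff_exists_nnreal_btwn.mp h
  have hgel := spectrum.pow_nnnorm_pow_one_div_tendsto_nhds_spectralRadius a
  have hev : ∀ᶠ n : ℕ in atTop, (‖a ^ n‖₊ : ℝ≥0∞) ^ (1 / (n : ℝ)) < (c : ℝ≥0∞) :=
    hgel.eventually_lt_const hc1
  have hbd : ∀ᶠ n : ℕ in atTop, ‖a ^ n‖ ≤ (c : ℝ) ^ n := by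
    filter_upwards [hev, eventually_ge_atTop 1] with n hn hn1
    have hn0 : (0 : ℝ) < n := by exact_mod_cast hn1
    have h1 : ((‖a ^ n‖₊ : ℝ≥0∞) ^ (1 / (n : ℝ))) ^ (n : ℝ) ≤ (c : ℝ≥0∞) ^ (n : ℝ) :=
      ENNReal.rpow_le_rpow hn.le (by positivity)
    rw [← ENNReal.rpow_mul, one_div, inv_mul_cancel₀ (ne_of_gt hn0), ENNReal.rpow_one,
      ENNReal.rpow_natCast, ← ENNReal.coe_pow, ENNReal.coe_le_coe] at h1
    exact_mod_cast h1
  have hc1' : (c : ℝ) < 1 := by exact_mod_cast hc2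
  have hgeo : Tendsto (fun n : ℕ => (c : ℝ) ^ n) atTop (nhds 0) :=
    tendsto_pow_atTop_nhds_zero_of_lt_one c.coe_nonneg hc1'
  exact squeeze_zero' (.of_forall fun n => norm_nonneg _) hbd hgeo

lemma myEntryLe {d : ℕ} (M : Matrix (Fin d) (Fin d) ℂ) (i j : Fin d) : ‖M i j‖ ≤ ‖M‖ := by
  have h1 : ‖M i j‖₊ ≤ ‖M‖₊ := by
    rw [Matrix.linfty_opNNNorm_def]
    exact le_trans
      (Finset.single_le_sum (f := fun j => ‖M i j‖₊) (fun k _ => zero_le) (Finset.mem_univ j))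
      (Finset.le_sup (f := fun i => ∑ j : Fin d, ‖M i j‖₊) (Finset.mem_univ i))
  exact_mod_cast h1

/-- `ρ(A) < 1` implies entries of `A^n` tend to zero. -/
lemma myMatPowTendsto {d : ℕ} (A : Matrix (Fin d) (Fin d) ℝ)
    (h : spectralRadius ℂ (A.map Complex.ofReal) < 1) :
    Tendsto (fun n : ℕ => (A ^ n : Matrix (Fin d) (Fin d) ℝ)) atTop
      (nhds (0 : Matrix (Fin d) (Fin d) ℝ)) := by
  haveI : CompleteSpace (Matrix (Fin d) (Fin d) ℂ) :=
    by infer_instance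
  have hB := myPowTendsto (A.map Complex.ofReal) h
  have hmap : ∀ n : ℕ, (A.map Complex.ofReal) ^ n = (A ^ n).map Complex.ofReal := by
    intro n
    have := map_pow (Complex.ofRealHom.mapMatrix (m := Fin d)) A n
    exact this.symm
  refine tendsto_pi_nhds.mpr ?_
  intro i
  rw [tendsto_pi_nhds]
  intro j
  have hb : ∀ n : ℕ, ‖(A ^ n) i j‖ ≤ ‖(A.map Complex.ofReal) ^ n‖ := by
    intro n
    rw [hmap n]
    simpa [Matrix.map_apply, Complex.norm_real] using
      myEntryLe ((A ^ n).map Complex.ofReal) i j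
  simpa using squeeze_zero_norm hb hB

end Helper

theorem stmt7 {d : ℕ} (A D : Matrix (Fin d) (Fin d) ℝ)
    (hrho : specRad A < 1) (hD : D.PosDef)
    (h : (D - Aᵀ * D * A).PosSemidef) :
    (D - (A ^ d)ᵀ * D * A ^ d).PosDef := by
  have key : ∀ (C : Matrix (Fin d) (Fin d) ℝ) (y : Fin d → ℝ),
      y ⬝ᵥ (D - Cᵀ * D * C) *ᵥ y = y ⬝ᵥ D *ᵥ y - (C *ᵥ y) ⬝ᵥ D *ᵥ (C *ᵥ y) := by
    intro C y
    rw [Matrix.sub_mulVec, dotProduct_sub]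
    congr 1
    rw [← Matrix.mulVec_mulVec, ← Matrix.mulVec_mulVec, Matrix.dotProduct_mulVec,
      Matrix.vecMul_transpose, Matrix.mulVec_mulVec]
  rw [Matrix.posDef_iff_dotProduct_mulVec]
  constructor
  · have h1 : ((A ^ d)ᴴ * D * A ^ d).IsHermitian :=
      Matrix.isHermitian_conjTranspose_mul_mul _ hD.1
    rw [Matrix.conjTranspose_eq_transpose_of_trivial] at h1
    exact hD.1.sub h1
  intro x hx
  rw [star_trivial, key]
  by_contra hcon
  push_neg at hcon
  have hd : 0 < d := by
    rcases Nat.eq_zero_or_pos d with h0 | h0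
    · subst h0; exact absurd (Subsingleton.elim x 0) hx
    · exact h0
  set q : (Fin d → ℝ) → ℝ := fun y => y ⬝ᵥ D *ᵥ y with hqdef
  set v : ℕ → Fin d → ℝ := fun n => (A ^ n) *ᵥ x with hvdef
  have hv0 : v 0 = x := by simp [hvdef]
  have hvsucc : ∀ n, v (n + 1) = A *ᵥ v n := by
    intro n
    simp only [hvdef, pow_succ', Matrix.mulVec_mulVec]
  have hkey' : ∀ y : Fin d → ℝ, y ⬝ᵥ (D - Aᵀ * D * A) *ᵥ y = q y - q (A *ᵥ y) := by
    intro y; rw [key, hqdef]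
  have hstep : ∀ y, q (A *ᵥ y) ≤ q y := by
    intro y
    have h2 := h.dotProduct_mulVec_nonneg y
    rw [star_trivial, hkey'] at h2
    linarith
  have hmono : ∀ m n, m ≤ n → q (v n) ≤ q (v m) := by
    intro m n hmn
    induction n, hmn using Nat.le_induction with
    | base => exact le_refl _
    | succ n hmn ih => rw [hvsucc]; exact le_trans (hstep _) ih
  have hqx_pos : 0 < q x := by
    have h2 := hD.dotProduct_mulVec_pos hx
    rwa [star_trivial] at h2
  have hcon' : q x ≤ q (v d) := by
    simp only [hqdef, hvdef]
    linarith [hcon]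
  have hall : ∀ k, k ≤ d → q (v k) = q x := by
    intro k hk
    have h1 : q (v k) ≤ q x := hv0 ▸ hmono 0 k (Nat.zero_le k)
    have h2 : q (v d) ≤ q (v k) := hmono k d hk
    linarith
  have hker : ∀ k, k < d → (D - Aᵀ * D * A) *ᵥ v k = 0 := by
    intro k hk
    have h1 : v k ⬝ᵥ (D - Aᵀ * D * A) *ᵥ v k = 0 := by
      rw [hkey', ← hvsucc, hall k (le_of_lt hk), hall (k + 1) hk]
      ring
    exact (h.dotProduct_mulVec_zero_iff (v k)).mp (by rwa [star_trivial])
  set W : Submodule ℝ (Fin d → ℝ) := Submodule.span ℝ (v '' Set.Iio d) with hWdef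
  have hWker : ∀ y ∈ W, (D - Aᵀ * D * A) *ᵥ y = 0 := by
    intro y hy
    induction hy using Submodule.span_induction with
    | mem y hy => obtain ⟨k, hk, rfl⟩ := hy; exact hker k hk
    | zero => simp [Matrix.mulVec_zero]
    | add a b _ _ ha hb => rw [Matrix.mulVec_add, ha, hb, add_zero]
    | smul c a _ ha => rw [Matrix.mulVec_smul, ha, smul_zero]
  have hgen : ∀ k, k < d → v k ∈ W := by
    intro k hk
    exact Submodule.subset_span ⟨k, hk, rfl⟩
  have hsum : ∀ (s : Finset ℕ) (f : ℕ → Matrix (Fin d) (Fin d) ℝ),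
      (∑ i ∈ s, f i) *ᵥ x = ∑ i ∈ s, (f i) *ᵥ x := by
    intro s f
    classical
    induction s using Finset.induction_on with
    | empty => simp [Matrix.zero_mulVec]
    | insert _ _ hns ih =>
      rw [Finset.sum_insert hns, Finset.sum_insert hns, Matrix.add_mulVec, ih]
  have hdeg : A.charpoly.natDegree = d := by
    rw [A.charpoly_natDegree_eq_dim, Fintype.card_fin]
  have hCH : A ^ d = ∑ i ∈ Finset.range d, (-(A.charpoly.coeff i)) • A ^ i := by
    have h0 := A.aeval_self_charpoly
    rw [Polynomial.aeval_eq_sum_range, hdeg, Finset.sum_range_succ] at h0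
    have hlead : A.charpoly.coeff d = 1 := by
      have h2 := A.charpoly_monic.coeff_natDegree
      rwa [hdeg] at h2
    rw [hlead, one_smul] at h0
    have h1 : A ^ d = -∑ i ∈ Finset.range d, A.charpoly.coeff i • A ^ i :=
      eq_neg_of_add_eq_zero_right h0
    rw [h1, ← Finset.sum_neg_distrib]
    simp only [neg_smul]
  have hvdW : v d ∈ W := by
    have h1 : v d = ∑ i ∈ Finset.range d, (-(A.charpoly.coeff i)) • v i := by
      show (A ^ d) *ᵥ x = _
      rw [hCH, hsum]
      congr 1
      ext i
      rw [Matrix.smul_mulVec]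
    rw [h1]
    exact Submodule.sum_mem W fun i hi =>
      Submodule.smul_mem W _ (hgen i (Finset.mem_range.mp hi))
  have hAW : ∀ y ∈ W, A *ᵥ y ∈ W := by
    intro y hy
    induction hy using Submodule.span_induction with
    | mem y hy =>
      obtain ⟨k, hk, rfl⟩ := hy
      rw [← hvsucc]
      rcases lt_or_eq_of_le (Nat.succ_le_of_lt hk) with h1 | h1
      · exact hgen _ h1
      · rw [show k + 1 = d from h1]; exact hvdW
    | zero => rw [Matrix.mulVec_zero]; exact Submodule.zero_mem W
    | add a b _ _ ha hb => rw [Matrix.mulVec_add]; exact Submodule.add_mem W ha hb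
    | smul c a _ ha => rw [Matrix.mulVec_smul]; exact Submodule.smul_mem W c ha
  have hvW : ∀ n, v n ∈ W := by
    intro n
    induction n with
    | zero => exact hgen 0 hd
    | succ n ih => rw [hvsucc]; exact hAW _ ih
  have hconst : ∀ n, q (v n) = q x := by
    intro n
    induction n with
    | zero => rw [hv0]
    | succ n ih =>
      have h1 := hkey' (v n)
      rw [hWker (v n) (hvW n), dotProduct_zero, ← hvsucc] at h1
      have : q (v (n + 1)) = q (v n) := by linarith
      rw [this, ih]
  have hpow := myMatPowTendsto A hrho
  have hcont : Continuous fun M : Matrix (Fin d) (Fin d) ℝ => (M *ᵥ x) ⬝ᵥ D *ᵥ (M *ᵥ x) := by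
    have h1 : Continuous fun M : Matrix (Fin d) (Fin d) ℝ => M *ᵥ x :=
      continuous_id.matrix_mulVec continuous_const
    exact h1.dotProduct (continuous_const.matrix_mulVec h1)
  have hlim : Tendsto (fun n => q (v n)) atTop (nhds 0) := by
    have h2 := (hcont.tendsto 0).comp hpow
    simp only [Function.comp_def, Matrix.zero_mulVec, zero_dotProduct] at h2
    simpa [hqdef, hvdef] using h2
  have hconstlim : Tendsto (fun n : ℕ => q (v n)) atTop (nhds (q x)) := by
    simp only [hconst]
    exact tendsto_const_nhds
  exact absurd (tendsto_nhds_unique hconstlim hlim) (ne_of_gt hqx_pos)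
end

section
/- Let S₁,…,S_K ∈ ℝ^{d×d} satisfy the weak Lyapunov condition P - S_kᵀPS_k ≥ 0 for a common symmetric positive-definite P. For a switching signal σ, let ω(σ) denote the set of limit points in ℝ^{d×d} of the sequence ⟨S_{σ(n)}⋯S_{σ(1)}⟩. Then for any two elements M, N ∈ ω(σ), MᵀPM = NᵀPN. -/
open Matrix Filter
open scoped ENNReal

lemma quad_eq {d : ℕ} (A P : Matrix (Fin d) (Fin d) ℝ) (x : Fin d → ℝ) :
    x ⬝ᵥ (Aᵀ * P * A).mulVec x = (A.mulVec x) ⬝ᵥ P.mulVec (A.mulVec x) := by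
  rw [← Matrix.mulVec_mulVec, ← Matrix.mulVec_mulVec, Matrix.dotProduct_mulVec,
    Matrix.vecMul_transpose]

lemma sym_quad_zero {d : ℕ} (A : Matrix (Fin d) (Fin d) ℝ) (hA : Aᵀ = A)
    (h : ∀ x : Fin d → ℝ, x ⬝ᵥ A.mulVec x = 0) : A = 0 := by
  have diag : ∀ i, A i i = 0 := by
    intro i
    have := h (Pi.single i 1)
    simpa [Matrix.mulVec_single, dotProduct_single] using this
  ext i j
  have hsym : A j i = A i j := by
    have := congrFun (congrFun hA i) j
    simpa [Matrix.transpose_apply] using this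
  have := h (Pi.single i 1 + Pi.single j 1)
  simp only [Matrix.mulVec_add, Matrix.mulVec_single_one, Matrix.col_apply, dotProduct_add, add_dotProduct,
    single_dotProduct, one_mul] at this
  rw [diag i, diag j, hsym] at this
  simp only [Matrix.zero_apply]
  linarith

theorem stmt10 {d K : ℕ} (S : Fin K → Matrix (Fin d) (Fin d) ℝ)
    (P : Matrix (Fin d) (Fin d) ℝ) (hP : P.PosDef)
    (hL : ∀ k, (P - (S k)ᵀ * P * S k).PosSemidef)
    (σ : ℕ → Fin K) :
    ∀ M ∈ omegaSet S σ, ∀ N ∈ omegaSet S σ, Mᵀ * P * M = Nᵀ * P * N := by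
  intro M hM N hN
  obtain ⟨φ, hφ, hMt⟩ := hM
  obtain ⟨ψ, hψ, hNt⟩ := hN
  have cont : ∀ x : Fin d → ℝ,
      Continuous (fun A : Matrix (Fin d) (Fin d) ℝ => x ⬝ᵥ (Aᵀ * P * A).mulVec x) := by
    intro x
    have h1 : Continuous (fun A : Matrix (Fin d) (Fin d) ℝ => Aᵀ * P * A) :=
      (continuous_id.matrix_transpose.matrix_mul continuous_const).matrix_mul continuous_id
    exact (continuous_const.dotProduct (h1.matrix_mulVec continuous_const))
  have key : ∀ x : Fin d → ℝ,
      x ⬝ᵥ (Mᵀ * P * M).mulVec x = x ⬝ᵥ (Nᵀ * P * N).mulVec x := by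
    intro x
    set f : ℕ → ℝ := fun n => x ⬝ᵥ ((prodsW S σ n)ᵀ * P * prodsW S σ n).mulVec x with hf
    have hanti : Antitone f := by
      apply antitone_nat_of_succ_le
      intro n
      have hsub := (hL (σ n)).dotProduct_mulVec_nonneg ((prodsW S σ n).mulVec x)
      set y := (prodsW S σ n).mulVec x with hy
      rw [star_trivial, Matrix.sub_mulVec, dotProduct_sub] at hsub
      have h1 : f (n+1) = y ⬝ᵥ ((S (σ n))ᵀ * P * S (σ n)).mulVec y := by
        show x ⬝ᵥ ((S (σ n) * prodsW S σ n)ᵀ * P * (S (σ n) * prodsW S σ n)).mulVec x = _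
        rw [quad_eq, quad_eq, hy, ← Matrix.mulVec_mulVec]
      have h2 : f n = y ⬝ᵥ P.mulVec y := by
        show x ⬝ᵥ ((prodsW S σ n)ᵀ * P * prodsW S σ n).mulVec x = _
        rw [quad_eq, hy]
      rw [h1, h2]
      linarith
    have hbdd : BddBelow (Set.range f) := by
      refine ⟨0, fun r hr => ?_⟩
      obtain ⟨n, rfl⟩ := hr
      have := hP.posSemidef.dotProduct_mulVec_nonneg ((prodsW S σ n).mulVec x)
      simp only [star_trivial] at this
      simpa [hf, quad_eq] using this
    have hlim := tendsto_atTop_ciInf hanti hbdd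
    have hMlim : Tendsto (fun i => f (φ i)) atTop (nhds (x ⬝ᵥ (Mᵀ * P * M).mulVec x)) :=
      ((cont x).tendsto M).comp hMt
    have hMlim' : Tendsto (fun i => f (φ i)) atTop (nhds (⨅ n, f n)) :=
      hlim.comp hφ.tendsto_atTop
    have hNlim : Tendsto (fun i => f (ψ i)) atTop (nhds (x ⬝ᵥ (Nᵀ * P * N).mulVec x)) :=
      ((cont x).tendsto N).comp hNt
    have hNlim' : Tendsto (fun i => f (ψ i)) atTop (nhds (⨅ n, f n)) :=
      hlim.comp hψ.tendsto_atTop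
    rw [tendsto_nhds_unique hMlim hMlim', tendsto_nhds_unique hNlim hNlim']
  have hPsym : Pᵀ = P := hP.isHermitian.eq
  have hsymM : (Mᵀ * P * M - (Nᵀ * P * N))ᵀ = Mᵀ * P * M - (Nᵀ * P * N) := by
    simp [Matrix.transpose_sub, Matrix.transpose_mul, hPsym, Matrix.mul_assoc]
  have := sym_quad_zero _ hsymM (fun x => by
    simp [Matrix.sub_mulVec, dotProduct_sub, key x])
  exact sub_eq_zero.mp this
end

section
/- Under the weak Lyapunov condition (common symmetric positive-definite P with P - S_kᵀPS_k ≥ 0 for k = 1,…,K), let Q_σ = √(MᵀPM) for any M ∈ ω(σ) (well-defined independently of M). Then for every x₀ ∈ ℝ^d, lim_{n→∞} ‖S_{σ(n)}⋯S_{σ(1)}x₀‖_P = ‖Q_σ x₀‖₂, where ‖·‖₂ is the Euclidean norm. In particular, the orbit of x₀ tends to 0 if and only if x₀ ∈ ker(Q_σ), and σ is asymptotically stable for the system if and only if Q_σ = 0. -/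
open Matrix Filter
open scoped ENNReal

open scoped ComplexOrder in
noncomputable def Matrix.PosSemidef.sqrt {n 𝕜 : Type*} [Fintype n] [RCLike 𝕜] [DecidableEq n]
    {A : Matrix n n 𝕜} (hA : A.PosSemidef) : Matrix n n 𝕜 :=
  hA.1.eigenvectorUnitary.1 * diagonal ((↑) ∘ (Real.sqrt ·) ∘ hA.1.eigenvalues) *
    (star hA.1.eigenvectorUnitary : Matrix n n 𝕜)

lemma Matrix.PosSemidef.posSemidef_sqrt {n : Type*} [Fintype n] [DecidableEq n]
    {A : Matrix n n ℝ} (hA : A.PosSemidef) : hA.sqrt.PosSemidef := by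
  unfold Matrix.PosSemidef.sqrt
  have := (PosSemidef.diagonal (d := ((↑) ∘ (Real.sqrt ·) ∘ hA.1.eigenvalues : n → ℝ))
    (fun i => by simp [Real.sqrt_nonneg])).mul_mul_conjTranspose_same (hA.1.eigenvectorUnitary.1)
  simpa [star_eq_conjTranspose, Function.comp_def] using this

lemma Matrix.PosSemidef.sqrt_mul_self {n : Type*} [Fintype n] [DecidableEq n]
    {A : Matrix n n ℝ} (hA : A.PosSemidef) : hA.sqrt * hA.sqrt = A := by
  let C : Matrix n n ℝ := hA.1.eigenvectorUnitary
  let E := diagonal ((↑) ∘ Real.sqrt ∘ hA.1.eigenvalues : n → ℝ)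
  suffices C * (E * (star C * C) * E) * star C = A by
    rw [Matrix.PosSemidef.sqrt]
    change (C * E * star C) * (C * E * star C) = A
    simpa only [← mul_assoc] using this
  have : E * E = diagonal ((↑) ∘ hA.1.eigenvalues) := by
    rw [diagonal_mul_diagonal]
    congr! with v
    simp [← pow_two, Real.sq_sqrt (hA.eigenvalues_nonneg v)]
  have h := hA.1.spectral_theorem
  rw [Unitary.conjStarAlgAut_apply] at h
  simpa [C, this, Matrix.mul_assoc, Function.comp_def] using h.symm

/-- Transfer of a quadratic form through a congruence. -/
lemma quad_transfer {d : ℕ} (A B : Matrix (Fin d) (Fin d) ℝ) (x : Fin d → ℝ) :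
    x ⬝ᵥ (Aᵀ * B * A).mulVec x = (A.mulVec x) ⬝ᵥ B.mulVec (A.mulVec x) := by
  rw [← mulVec_mulVec, ← mulVec_mulVec, dotProduct_mulVec, vecMul_transpose]

lemma sq_le_dotProduct_self {d : ℕ} (v : Fin d → ℝ) (i : Fin d) : v i ^ 2 ≤ v ⬝ᵥ v := by
  have : v ⬝ᵥ v = ∑ j, v j ^ 2 := by
    simp [dotProduct, sq]
  rw [this]
  exact Finset.single_le_sum (f := fun j => v j ^ 2) (fun j _ => sq_nonneg _)
    (Finset.mem_univ i)

theorem stmt12 {d K : ℕ} (S : Fin K → Matrix (Fin d) (Fin d) ℝ)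
    (P : Matrix (Fin d) (Fin d) ℝ) (hP : P.PosDef)
    (hL : ∀ k, (P - (S k)ᵀ * P * S k).PosSemidef)
    (σ : ℕ → Fin K)
    (M : Matrix (Fin d) (Fin d) ℝ) (hM : M ∈ omegaSet S σ)
    (hpsd : (Mᵀ * P * M).PosSemidef) :
    (∀ x₀ : Fin d → ℝ,
      Tendsto (fun n => Pnorm P ((prodsW S σ n).mulVec x₀)) atTop
        (nhds (Pnorm 1 (hpsd.sqrt.mulVec x₀)))) ∧
    (∀ x₀ : Fin d → ℝ,
      Tendsto (fun n => (prodsW S σ n).mulVec x₀) atTop (nhds 0) ↔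
        hpsd.sqrt.mulVec x₀ = 0) ∧
    ((∀ x₀ : Fin d → ℝ,
      Tendsto (fun n => (prodsW S σ n).mulVec x₀) atTop (nhds 0)) ↔ hpsd.sqrt = 0) := by
  obtain ⟨φ, hφ, hlim⟩ := hM
  set Q := hpsd.sqrt with hQdef
  have hQsym : Qᵀ = Q := by
    have h := hpsd.posSemidef_sqrt.1
    rwa [Matrix.IsHermitian, conjTranspose_eq_transpose_of_trivial] at h
  have hQQ : Q * Q = Mᵀ * P * M := hpsd.sqrt_mul_self
  -- limit value identity
  have hval : ∀ x₀ : Fin d → ℝ,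
      x₀ ⬝ᵥ (Mᵀ * P * M).mulVec x₀ = (Q.mulVec x₀) ⬝ᵥ (Q.mulVec x₀) := by
    intro x₀
    calc x₀ ⬝ᵥ (Mᵀ * P * M).mulVec x₀ = x₀ ⬝ᵥ (Qᵀ * 1 * Q).mulVec x₀ := by
          rw [hQsym, Matrix.mul_one, hQQ]
      _ = (Q.mulVec x₀) ⬝ᵥ (1 : Matrix (Fin d) (Fin d) ℝ).mulVec (Q.mulVec x₀) :=
          quad_transfer Q 1 x₀
      _ = (Q.mulVec x₀) ⬝ᵥ (Q.mulVec x₀) := by rw [one_mulVec]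
  -- the key convergence of the quadratic form
  have key : ∀ x₀ : Fin d → ℝ,
      Tendsto (fun n => ((prodsW S σ n).mulVec x₀) ⬝ᵥ P.mulVec ((prodsW S σ n).mulVec x₀))
        atTop (nhds ((Q.mulVec x₀) ⬝ᵥ (Q.mulVec x₀))) := by
    intro x₀
    set g : ℕ → ℝ :=
      fun n => ((prodsW S σ n).mulVec x₀) ⬝ᵥ P.mulVec ((prodsW S σ n).mulVec x₀) with hg
    have hmono : Antitone g := by
      apply antitone_nat_of_succ_le
      intro n
      set y := (prodsW S σ n).mulVec x₀ with hy
      have hstep : g (n + 1) = ((S (σ n)).mulVec y) ⬝ᵥ P.mulVec ((S (σ n)).mulVec y) := by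
        simp only [hg, prodsW, ← mulVec_mulVec, hy]
      have h0 := (hL (σ n)).dotProduct_mulVec_nonneg y
      rw [star_trivial, sub_mulVec, dotProduct_sub] at h0
      have h1 : y ⬝ᵥ ((S (σ n))ᵀ * P * S (σ n)).mulVec y
          = ((S (σ n)).mulVec y) ⬝ᵥ P.mulVec ((S (σ n)).mulVec y) := quad_transfer _ _ _
      rw [h1] at h0
      rw [hstep]
      linarith
    have hbdd : BddBelow (Set.range g) := by
      refine ⟨0, ?_⟩
      rintro _ ⟨n, rfl⟩
      have := hP.posSemidef.dotProduct_mulVec_nonneg ((prodsW S σ n).mulVec x₀)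
      simpa only [star_trivial, hg] using this
    have hconv : Tendsto g atTop (nhds (⨅ n, g n)) := tendsto_atTop_ciInf hmono hbdd
    have hcont : Continuous fun A : Matrix (Fin d) (Fin d) ℝ =>
        (A.mulVec x₀) ⬝ᵥ P.mulVec (A.mulVec x₀) := by
      have h1 : Continuous fun A : Matrix (Fin d) (Fin d) ℝ => A.mulVec x₀ :=
        continuous_id.matrix_mulVec continuous_const
      exact h1.dotProduct ((continuous_const (y := P)).matrix_mulVec h1)
    have hsub : Tendsto (fun i => g (φ i)) atTop
        (nhds ((M.mulVec x₀) ⬝ᵥ P.mulVec (M.mulVec x₀))) :=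
      (hcont.tendsto M).comp hlim
    have hsub' : Tendsto (fun i => g (φ i)) atTop (nhds (⨅ n, g n)) :=
      hconv.comp hφ.tendsto_atTop
    have heq : (⨅ n, g n) = (M.mulVec x₀) ⬝ᵥ P.mulVec (M.mulVec x₀) :=
      tendsto_nhds_unique hsub' hsub
    have heq2 : (M.mulVec x₀) ⬝ᵥ P.mulVec (M.mulVec x₀) = (Q.mulVec x₀) ⬝ᵥ (Q.mulVec x₀) := by
      rw [← quad_transfer M P x₀, hval]
    rw [heq, heq2] at hconv
    exact hconv
  -- part 1
  have part1 : ∀ x₀ : Fin d → ℝ,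
      Tendsto (fun n => Pnorm P ((prodsW S σ n).mulVec x₀)) atTop
        (nhds (Pnorm 1 (Q.mulVec x₀))) := by
    intro x₀
    have h := (Real.continuous_sqrt.tendsto _).comp (key x₀)
    have : Pnorm 1 (Q.mulVec x₀) = Real.sqrt ((Q.mulVec x₀) ⬝ᵥ (Q.mulVec x₀)) := by
      rw [Pnorm, one_mulVec]
    rw [this]
    exact h
  -- part 2
  have part2 : ∀ x₀ : Fin d → ℝ,
      Tendsto (fun n => (prodsW S σ n).mulVec x₀) atTop (nhds 0) ↔ Q.mulVec x₀ = 0 := by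
    intro x₀
    constructor
    · intro h
      have hcont : Continuous fun v : Fin d → ℝ => v ⬝ᵥ P.mulVec v :=
        continuous_id.dotProduct ((continuous_const (y := P)).matrix_mulVec continuous_id)
      have h0 : Tendsto (fun n => ((prodsW S σ n).mulVec x₀) ⬝ᵥ
          P.mulVec ((prodsW S σ n).mulVec x₀)) atTop (nhds ((0 : Fin d → ℝ) ⬝ᵥ P.mulVec 0)) :=
        (hcont.tendsto 0).comp h
      rw [mulVec_zero, dotProduct_zero] at h0
      have := tendsto_nhds_unique (key x₀) h0
      exact dotProduct_self_eq_zero.mp this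
    · intro h
      have hzero : Tendsto (fun n => ((prodsW S σ n).mulVec x₀) ⬝ᵥ
          P.mulVec ((prodsW S σ n).mulVec x₀)) atTop (nhds 0) := by
        have := key x₀
        rwa [h, dotProduct_zero] at this
      -- use the sqrt of P
      set R := hP.posSemidef.sqrt with hRdef
      have hRsym : Rᵀ = R := by
        have h' := hP.posSemidef.posSemidef_sqrt.1
        rwa [Matrix.IsHermitian, conjTranspose_eq_transpose_of_trivial] at h'
      have hRR : R * R = P := hP.posSemidef.sqrt_mul_self
      have hRdet : IsUnit R.det := by
        have hd : R.det * R.det = P.det := by rw [← det_mul, hRR]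
        have hPdet : P.det ≠ 0 := ne_of_gt hP.det_pos
        have : R.det ≠ 0 := fun h0 => hPdet (by rw [← hd, h0, mul_zero])
        exact isUnit_iff_ne_zero.mpr this
      set z : ℕ → Fin d → ℝ := fun n => R.mulVec ((prodsW S σ n).mulVec x₀) with hz
      have hzdot : ∀ n, (z n) ⬝ᵥ (z n) =
          ((prodsW S σ n).mulVec x₀) ⬝ᵥ P.mulVec ((prodsW S σ n).mulVec x₀) := by
        intro n
        show (R.mulVec ((prodsW S σ n).mulVec x₀)) ⬝ᵥ (R.mulVec ((prodsW S σ n).mulVec x₀)) = _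
        have h2 := quad_transfer R 1 ((prodsW S σ n).mulVec x₀)
        rw [hRsym, Matrix.mul_one, hRR, one_mulVec] at h2
        exact h2.symm
      have hztendsto : Tendsto z atTop (nhds 0) := by
        rw [tendsto_pi_nhds]
        intro i
        have habs : Tendsto (fun n => |z n i|) atTop (nhds 0) := by
          have hle : ∀ n, |z n i| ≤ Real.sqrt ((z n) ⬝ᵥ (z n)) := by
            intro n
            rw [← Real.sqrt_sq_eq_abs]
            exact Real.sqrt_le_sqrt (sq_le_dotProduct_self (z n) i)
          have hsq : Tendsto (fun n => Real.sqrt ((z n) ⬝ᵥ (z n))) atTop (nhds 0) := by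
            have := (Real.continuous_sqrt.tendsto 0).comp
              (by simpa only [hzdot] using hzero :
                Tendsto (fun n => (z n) ⬝ᵥ (z n)) atTop (nhds 0))
            simpa [Function.comp_def] using this
          exact squeeze_zero (fun n => abs_nonneg _) hle hsq
        have := (tendsto_zero_iff_abs_tendsto_zero _).mpr habs
        simpa using this
      have hrec : ∀ n, (prodsW S σ n).mulVec x₀ = R⁻¹.mulVec (z n) := by
        intro n
        rw [hz, mulVec_mulVec, Matrix.nonsing_inv_mul R hRdet, one_mulVec]
      have : Tendsto (fun n => R⁻¹.mulVec (z n)) atTop (nhds (R⁻¹.mulVec 0)) := by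
        exact (((continuous_const (y := R⁻¹)).matrix_mulVec continuous_id).tendsto 0).comp
          hztendsto
      rw [mulVec_zero] at this
      simpa only [← hrec] using this
  refine ⟨part1, part2, ?_⟩
  constructor
  · intro h
    ext i j
    have h0 : Q.mulVec (Pi.single j 1) = 0 := (part2 _).mp (h _)
    have := congrFun h0 i
    simpa [mulVec_single] using this
  · intro h x₀
    exact (part2 x₀).mpr (by rw [h, zero_mulVec])
end

section
/- Let T : Ω → Ω be a continuous transformation of a separable metrizable space and A : Ω → ℝ^{d×d} continuous, with a norm ‖·‖ on ℝ^d such that the cocycle A_T(n,w) = A(T^{n-1}w)⋯A(w) satisfies ‖A_T(n,w)‖ ≤ 1 for all n ≥ 1 and w ∈ Ω. If w is a weakly Birkhoff recurrent point of T and there exist i ≥ 0 and n ≥ 1 with ‖A_T(n, T^i w)‖ < 1, then ‖A_T(n,w)‖ → 0 exponentially fast as n → ∞; otherwise ‖A_T(n, T^i w)‖ = 1 for all i ≥ 0 and n ≥ 1. -/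
open Matrix Filter
open scoped ENNReal

noncomputable def opNu {d : ℕ} (ν : (Fin d → ℝ) → ℝ) (A : Matrix (Fin d) (Fin d) ℝ) : ℝ :=
  sSup ((fun x => ν (A.mulVec x)) '' {x | ν x = 1})

def coc {d : ℕ} {Ω : Type*} (T : Ω → Ω) (A : Ω → Matrix (Fin d) (Fin d) ℝ) :
    ℕ → Ω → Matrix (Fin d) (Fin d) ℝ
  | 0, _ => 1
  | n + 1, w => A (T^[n] w) * coc T A n w

lemma fin_orderEmb_gap {L : ℕ} (f : Fin L ↪o ℕ) (r : ℕ) :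
    ∀ a b : Fin L, (a : ℕ) + r ≤ (b : ℕ) → (f a) + r ≤ f b := by
  induction r with
  | zero =>
    intro a b h
    simpa using f.monotone (by rwa [Fin.le_def, ← Nat.add_zero (a : ℕ)])
  | succ r ih =>
    intro a b h
    have hb1 : b.val - 1 < L := by omega
    have h1 := ih a ⟨b.val - 1, hb1⟩ (by simp; omega)
    have h2 : f ⟨b.val - 1, hb1⟩ < f b := f.strictMono (by rw [Fin.lt_def]; simp; omega)
    omega

lemma nu_sum_le {d : ℕ} {ν : (Fin d → ℝ) → ℝ}
    (hadd : ∀ x y, ν (x + y) ≤ ν x + ν y) (hν0 : ν 0 = 0)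
    {ι : Type*} (s : Finset ι) (f : ι → Fin d → ℝ) :
    ν (∑ i ∈ s, f i) ≤ ∑ i ∈ s, ν (f i) := by
  induction s using Finset.cons_induction with
  | empty => simp [hν0]
  | cons a s ha ih =>
    rw [Finset.sum_cons, Finset.sum_cons]
    exact le_trans (hadd _ _) (by linarith)

lemma coc_add {d : ℕ} {Ω : Type*} (T : Ω → Ω) (A : Ω → Matrix (Fin d) (Fin d) ℝ) :
    ∀ (n m : ℕ) (u : Ω), coc T A (m + n) u = coc T A n (T^[m] u) * coc T A m u := by
  intro n
  induction n with
  | zero => intro m u; simp [coc]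
  | succ k ih =>
    intro m u
    have h1 : m + (k + 1) = (m + k) + 1 := by omega
    rw [h1]
    show A (T^[m + k] u) * coc T A (m + k) u
        = (A (T^[k] (T^[m] u)) * coc T A k (T^[m] u)) * coc T A m u
    rw [ih m u, ← mul_assoc, add_comm m k, Function.iterate_add_apply]

lemma coc_cont {d : ℕ} {Ω : Type*} [TopologicalSpace Ω] (T : Ω → Ω) (hT : Continuous T)
    (A : Ω → Matrix (Fin d) (Fin d) ℝ) (hA : Continuous A) (n : ℕ) :
    Continuous (fun u => coc T A n u) := by
  induction n with
  | zero => exact continuous_const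
  | succ k ih => exact Continuous.matrix_mul (hA.comp (hT.iterate k)) ih

noncomputable def entSum {d : ℕ} (M : Matrix (Fin d) (Fin d) ℝ) : ℝ :=
  ∑ j : Fin d, ∑ i : Fin d, |M j i|

lemma entSum_nonneg {d : ℕ} (M : Matrix (Fin d) (Fin d) ℝ) : 0 ≤ entSum M :=
  Finset.sum_nonneg fun j _ => Finset.sum_nonneg fun i _ => abs_nonneg _

lemma entSum_zero {d : ℕ} : entSum (0 : Matrix (Fin d) (Fin d) ℝ) = 0 := by
  unfold entSum; simp

lemma entSum_sub_comm {d : ℕ} (M N : Matrix (Fin d) (Fin d) ℝ) :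
    entSum (M - N) = entSum (N - M) := by
  unfold entSum
  refine Finset.sum_congr rfl fun j _ => Finset.sum_congr rfl fun i _ => ?_
  rw [Matrix.sub_apply, Matrix.sub_apply, abs_sub_comm]

lemma entSum_cont {d : ℕ} : Continuous (entSum (d := d)) := by
  unfold entSum
  refine continuous_finset_sum _ fun j _ => continuous_finset_sum _ fun i _ => ?_
  exact ((continuous_apply i).comp (continuous_apply j)).abs

lemma mulVec_norm_le {d : ℕ} (M : Matrix (Fin d) (Fin d) ℝ) (x : Fin d → ℝ) :
    ‖M.mulVec x‖ ≤ entSum M * ‖x‖ := by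
  rw [pi_norm_le_iff_of_nonneg (mul_nonneg (entSum_nonneg M) (norm_nonneg x))]
  intro j
  have h1 : M.mulVec x j = ∑ i : Fin d, M j i * x i := rfl
  rw [h1, Real.norm_eq_abs]
  calc |∑ i : Fin d, M j i * x i| ≤ ∑ i : Fin d, |M j i * x i| :=
        Finset.abs_sum_le_sum_abs _ _
    _ ≤ ∑ i : Fin d, |M j i| * ‖x‖ := by
        refine Finset.sum_le_sum fun i _ => ?_
        rw [abs_mul]
        refine mul_le_mul_of_nonneg_left ?_ (abs_nonneg _)
        simpa [Real.norm_eq_abs] using norm_le_pi_norm x i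
    _ = (∑ i : Fin d, |M j i|) * ‖x‖ := by rw [Finset.sum_mul]
    _ ≤ entSum M * ‖x‖ := by
        refine mul_le_mul_of_nonneg_right ?_ (norm_nonneg _)
        exact Finset.single_le_sum (f := fun j => ∑ i : Fin d, |M j i|)
          (fun j _ => Finset.sum_nonneg fun _ _ => abs_nonneg _) (Finset.mem_univ j)


open Classical in
theorem stmt13 {d : ℕ} {Ω : Type*} [MetricSpace Ω] [TopologicalSpace.SeparableSpace Ω]
    (T : Ω → Ω) (hT : Continuous T)
    (A : Ω → Matrix (Fin d) (Fin d) ℝ) (hA : Continuous A)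
    (ν : (Fin d → ℝ) → ℝ)
    (h0 : ∀ x, ν x = 0 ↔ x = 0)
    (hadd : ∀ x y, ν (x + y) ≤ ν x + ν y)
    (hsmul : ∀ (c : ℝ) x, ν (c • x) = |c| * ν x)
    (hbound : ∀ n : ℕ, 1 ≤ n → ∀ w : Ω, opNu ν (coc T A n w) ≤ 1)
    (w : Ω)
    (hwbr : ∀ ε : ℝ, 0 < ε → ∃ Nε : ℕ, 1 ≤ Nε ∧ ∀ j : ℕ,
      j ≤ ((Finset.range (j * Nε)).filter (fun i => dist (T^[i] w) w < ε)).card) :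
    ((∃ i : ℕ, ∃ n : ℕ, 1 ≤ n ∧ opNu ν (coc T A n (T^[i] w)) < 1) →
      ∃ C : ℝ, 0 < C ∧ ∃ lam : ℝ, 0 < lam ∧ lam < 1 ∧
        ∀ n : ℕ, opNu ν (coc T A n w) ≤ C * lam ^ n) ∧
    ((¬ ∃ i : ℕ, ∃ n : ℕ, 1 ≤ n ∧ opNu ν (coc T A n (T^[i] w)) < 1) →
      ∀ i : ℕ, ∀ n : ℕ, 1 ≤ n → opNu ν (coc T A n (T^[i] w)) = 1) := by
  constructor
  · -- main branch
    rintro ⟨i, n, hn, hlt⟩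
    -- trivial case d = 0
    rcases Nat.eq_zero_or_pos d with hd | hd
    · subst hd
      refine ⟨1, one_pos, 1/2, by norm_num, by norm_num, fun n' => ?_⟩
      have hempty : {x : Fin 0 → ℝ | ν x = 1} = ∅ := by
        ext x
        simp only [Set.mem_setOf_eq, Set.mem_empty_iff_false, iff_false]
        have hx : x = 0 := Subsingleton.elim x 0
        rw [hx, (h0 0).2 rfl]
        norm_num
      have h1 : opNu ν (coc T A n' w) = 0 := by
        unfold opNu
        rw [hempty, Set.image_empty, Real.sSup_empty]
      rw [h1]
      positivity
    -- now d ≥ 1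
    have hνzero : ν 0 = 0 := (h0 0).2 rfl
    have hνneg : ∀ x, ν (-x) = ν x := fun x => by
      simpa using hsmul (-1) x
    have hνnn : ∀ x, 0 ≤ ν x := by
      intro x
      have h1 := hadd x (-x)
      rw [add_neg_cancel, hνzero, hνneg] at h1
      linarith
    have hνpos : ∀ x, x ≠ 0 → 0 < ν x := by
      intro x hx
      exact lt_of_le_of_ne (hνnn x) (Ne.symm fun h => hx ((h0 x).1 h))
    -- upper bound of ν by the sup norm
    obtain ⟨Cup, hCupdef⟩ : ∃ Cup : ℝ, Cup = ∑ j : Fin d, ν (Pi.single j 1) := ⟨_, rfl⟩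
    have hCupnn : 0 ≤ Cup := hCupdef ▸ Finset.sum_nonneg fun j _ => hνnn _
    have hup : ∀ x, ν x ≤ Cup * ‖x‖ := by
      intro x
      have h1 : ν x = ν (∑ j : Fin d, Pi.single j (x j)) := by
        rw [Finset.univ_sum_single]
      rw [h1]
      refine le_trans (nu_sum_le hadd hνzero _ _) ?_
      have h2 : ∀ j : Fin d, ν (Pi.single j (x j)) ≤ ‖x‖ * ν (Pi.single j 1) := by
        intro j
        have h3 : Pi.single j (x j) = (x j) • (Pi.single j 1 : Fin d → ℝ) := by
          funext k
          by_cases hk : k = j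
          · subst hk; simp
          · simp [Pi.single_apply, hk]
        rw [h3, hsmul]
        have h4 : |x j| ≤ ‖x‖ := by
          simpa [Real.norm_eq_abs] using norm_le_pi_norm x j
        exact mul_le_mul_of_nonneg_right h4 (hνnn _)
      refine le_trans (Finset.sum_le_sum fun j _ => h2 j) ?_
      rw [← Finset.mul_sum, ← hCupdef, mul_comm]
    have hlipsub : ∀ x y, |ν x - ν y| ≤ ν (x - y) := by
      intro x y
      rw [abs_sub_le_iff]
      constructor
      · have := hadd y (x - y)
        rw [add_sub_cancel] at this
        linarith
      · have := hadd x (y - x)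
        rw [add_sub_cancel] at this
        have h2 : ν (y - x) = ν (x - y) := by
          rw [← hνneg (y - x)]; congr 1; abel
        linarith
    have hνcont : Continuous ν := by
      refine Metric.continuous_iff.mpr fun x ε hε => ⟨ε / (Cup + 1), by positivity, fun y hy => ?_⟩
      rw [Real.dist_eq]
      have h1 : |ν y - ν x| ≤ Cup * ‖y - x‖ := le_trans (hlipsub y x) (hup _)
      rw [dist_eq_norm] at hy
      have h2 : (0:ℝ) ≤ ‖y - x‖ := norm_nonneg _
      have h4 : Cup * ‖y - x‖ ≤ Cup * (ε / (Cup + 1)) :=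
        mul_le_mul_of_nonneg_left (le_of_lt hy) hCupnn
      have h5 : Cup * (ε / (Cup + 1)) < ε := by
        rw [mul_div_assoc', div_lt_iff₀ (by linarith)]
        nlinarith
      linarith
    -- lower bound via compactness
    haveI : Nonempty (Fin d) := ⟨⟨0, hd⟩⟩
    haveI : Nontrivial (Fin d → ℝ) := by
      refine ⟨0, Pi.single ⟨0, hd⟩ 1, fun h => ?_⟩
      have := congrFun h ⟨0, hd⟩
      simp at this
    have hsphne : (Metric.sphere (0 : Fin d → ℝ) 1).Nonempty :=
      NormedSpace.sphere_nonempty.mpr zero_le_one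
    obtain ⟨x0, hx0mem, hx0min⟩ :=
      (isCompact_sphere (0 : Fin d → ℝ) 1).exists_isMinOn hsphne hνcont.continuousOn
    have hx0norm : ‖x0‖ = 1 := by simpa using hx0mem
    obtain ⟨c, hcdef⟩ : ∃ c : ℝ, c = ν x0 := ⟨_, rfl⟩
    have hc : 0 < c := by
      rw [hcdef]
      refine hνpos x0 fun h => ?_
      rw [h] at hx0norm; simp at hx0norm
    have hlow : ∀ x, c * ‖x‖ ≤ ν x := by
      intro x
      rcases eq_or_ne x 0 with rfl | hx
      · simp [hνzero]
      · have hnx : 0 < ‖x‖ := norm_pos_iff.mpr hx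
        have hmem : ‖x‖⁻¹ • x ∈ Metric.sphere (0 : Fin d → ℝ) 1 := by
          simp [norm_smul, abs_of_pos (inv_pos.mpr hnx), inv_mul_cancel₀ (ne_of_gt hnx)]
        have h1 : c ≤ ν (‖x‖⁻¹ • x) := hcdef ▸ hx0min hmem
        rw [hsmul, abs_of_pos (inv_pos.mpr hnx)] at h1
        have h2 : c * ‖x‖ ≤ (‖x‖⁻¹ * ν x) * ‖x‖ :=
          mul_le_mul_of_nonneg_right h1 (norm_nonneg _)
        calc c * ‖x‖ ≤ (‖x‖⁻¹ * ν x) * ‖x‖ := h2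
          _ = ν x := by field_simp
    have hnorm_le : ∀ x, ‖x‖ ≤ c⁻¹ * ν x := by
      intro x
      have h1 := hlow x
      calc ‖x‖ = c⁻¹ * (c * ‖x‖) := by field_simp
        _ ≤ c⁻¹ * ν x := mul_le_mul_of_nonneg_left h1 (le_of_lt (inv_pos.mpr hc))
    have hKbound : ∀ (M : Matrix (Fin d) (Fin d) ℝ) x,
        ν (M.mulVec x) ≤ (Cup * entSum M * c⁻¹) * ν x := by
      intro M x
      calc ν (M.mulVec x) ≤ Cup * ‖M.mulVec x‖ := hup _
        _ ≤ Cup * (entSum M * ‖x‖) :=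
            mul_le_mul_of_nonneg_left (mulVec_norm_le M x) hCupnn
        _ ≤ Cup * (entSum M * (c⁻¹ * ν x)) :=
            mul_le_mul_of_nonneg_left
              (mul_le_mul_of_nonneg_left (hnorm_le x) (entSum_nonneg M)) hCupnn
        _ = (Cup * entSum M * c⁻¹) * ν x := by ring
    -- basic opNu facts
    obtain ⟨x1, hx1⟩ : ∃ x, ν x = 1 := by
      obtain ⟨y, hy⟩ : ∃ y : Fin d → ℝ, y ≠ 0 := by
        refine ⟨Pi.single ⟨0, hd⟩ 1, fun h => ?_⟩
        have := congrFun h ⟨0, hd⟩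
        simp at this
      have hνy : 0 < ν y := hνpos _ hy
      refine ⟨(ν y)⁻¹ • y, ?_⟩
      rw [hsmul, abs_of_pos (inv_pos.mpr hνy), inv_mul_cancel₀ (ne_of_gt hνy)]
    have hSne : ∀ M : Matrix (Fin d) (Fin d) ℝ,
        ((fun x => ν (M.mulVec x)) '' {x | ν x = 1}).Nonempty :=
      fun M => ⟨_, ⟨x1, hx1, rfl⟩⟩
    have hbdd : ∀ M : Matrix (Fin d) (Fin d) ℝ,
        BddAbove ((fun x => ν (M.mulVec x)) '' {x | ν x = 1}) := by
      intro M
      refine ⟨Cup * entSum M * c⁻¹, ?_⟩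
      rintro v ⟨x, hx, rfl⟩
      have h1 := hKbound M x
      rw [hx, mul_one] at h1
      exact h1
    have hle_opNu : ∀ (M : Matrix (Fin d) (Fin d) ℝ) x, ν x = 1 →
        ν (M.mulVec x) ≤ opNu ν M :=
      fun M x hx => le_csSup (hbdd M) ⟨x, hx, rfl⟩
    have hopNu_le : ∀ (M : Matrix (Fin d) (Fin d) ℝ) (b : ℝ),
        (∀ x, ν x = 1 → ν (M.mulVec x) ≤ b) → opNu ν M ≤ b := by
      intro M b hb
      refine csSup_le (hSne M) ?_
      rintro v ⟨x, hx, rfl⟩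
      exact hb x hx
    have hopNu_nn : ∀ M : Matrix (Fin d) (Fin d) ℝ, 0 ≤ opNu ν M :=
      fun M => le_trans (hνnn _) (hle_opNu M x1 hx1)
    have hopNu_mulVec : ∀ (M : Matrix (Fin d) (Fin d) ℝ) x,
        ν (M.mulVec x) ≤ opNu ν M * ν x := by
      intro M x
      rcases eq_or_ne x 0 with rfl | hx
      · simp [Matrix.mulVec_zero, hνzero]
      · have hνx : 0 < ν x := hνpos x hx
        have hu : ν ((ν x)⁻¹ • x) = 1 := by
          rw [hsmul, abs_of_pos (inv_pos.mpr hνx), inv_mul_cancel₀ (ne_of_gt hνx)]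
        have h1 := hle_opNu M _ hu
        rw [Matrix.mulVec_smul, hsmul, abs_of_pos (inv_pos.mpr hνx)] at h1
        have hinv : (ν x)⁻¹ * ν x = 1 := inv_mul_cancel₀ (ne_of_gt hνx)
        calc ν (M.mulVec x) = ((ν x)⁻¹ * ν (M.mulVec x)) * ν x := by
              rw [mul_comm ((ν x)⁻¹) (ν (M.mulVec x)), mul_assoc, hinv, mul_one]
          _ ≤ opNu ν M * ν x := mul_le_mul_of_nonneg_right h1 (le_of_lt hνx)
    have hopNu_mul : ∀ M N : Matrix (Fin d) (Fin d) ℝ,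
        opNu ν (M * N) ≤ opNu ν M * opNu ν N := by
      intro M N
      refine hopNu_le _ _ fun x hx => ?_
      have h1 : (M * N).mulVec x = M.mulVec (N.mulVec x) := (Matrix.mulVec_mulVec x M N).symm
      rw [h1]
      calc ν (M.mulVec (N.mulVec x)) ≤ opNu ν M * ν (N.mulVec x) := hopNu_mulVec M _
        _ ≤ opNu ν M * (opNu ν N * ν x) := by
            have h2 := hopNu_mulVec N x
            exact mul_le_mul_of_nonneg_left h2 (hopNu_nn M)
        _ = opNu ν M * opNu ν N := by rw [hx, mul_one]
    have hopNu_one : opNu ν (1 : Matrix (Fin d) (Fin d) ℝ) = 1 := by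
      refine le_antisymm (hopNu_le _ _ fun x hx => ?_) ?_
      · rw [Matrix.one_mulVec, hx]
      · have h1 := hle_opNu 1 x1 hx1
        rwa [Matrix.one_mulVec, hx1] at h1
    -- continuity of opNu
    have hopNu_lip : ∀ M N : Matrix (Fin d) (Fin d) ℝ,
        |opNu ν M - opNu ν N| ≤ Cup * entSum (M - N) * c⁻¹ := by
      intro M N
      have key : ∀ P Q : Matrix (Fin d) (Fin d) ℝ,
          opNu ν P ≤ opNu ν Q + Cup * entSum (P - Q) * c⁻¹ := by
        intro P Q
        refine hopNu_le _ _ fun x hx => ?_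
        have h1 : P.mulVec x = Q.mulVec x + (P - Q).mulVec x := by
          rw [Matrix.sub_mulVec]; abel
        rw [h1]
        refine le_trans (hadd _ _) ?_
        have h2 := hle_opNu Q x hx
        have h3 := hKbound (P - Q) x
        rw [hx, mul_one] at h3
        linarith
      rw [abs_sub_le_iff]
      constructor
      · have := key M N; linarith
      · have h1 := key N M
        rw [entSum_sub_comm N M] at h1
        linarith
    have hopNu_cont : Continuous (opNu ν) := by
      rw [continuous_iff_continuousAt]
      intro M0
      have hg_cont : Continuous (fun M : Matrix (Fin d) (Fin d) ℝ =>
          Cup * entSum (M - M0) * c⁻¹) :=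
        (continuous_const.mul (entSum_cont.comp (continuous_id.sub continuous_const))).mul
          continuous_const
      have htend : Tendsto (fun M => opNu ν M - opNu ν M0) (nhds M0) (nhds 0) := by
        refine squeeze_zero_norm
          (fun M => le_trans (le_of_eq (Real.norm_eq_abs _)) (hopNu_lip M M0)) ?_
        have h1 := hg_cont.tendsto M0
        have h2 : Cup * entSum (M0 - M0) * c⁻¹ = 0 := by
          rw [sub_self, entSum_zero]; ring
        rwa [h2] at h1
      have h3 := htend.add_const (opNu ν M0)
      simpa [ContinuousAt] using h3
    -- cocycle norms at w
    have hcoc0 : opNu ν (coc T A 0 w) = 1 := by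
      have h1 : coc T A 0 w = 1 := rfl
      rw [h1, hopNu_one]
    have hcoc_le_one : ∀ (r : ℕ) (u : Ω), opNu ν (coc T A r u) ≤ 1 := by
      intro r u
      rcases Nat.eq_zero_or_pos r with rfl | hr
      · have h1 : coc T A 0 u = 1 := rfl
        rw [h1, hopNu_one]
      · exact hbound r hr u
    have ha_mono : ∀ p q : ℕ, p ≤ q → opNu ν (coc T A q w) ≤ opNu ν (coc T A p w) := by
      intro p q hpq
      obtain ⟨r, rfl⟩ := Nat.exists_eq_add_of_le hpq
      rw [coc_add T A r p w]
      refine le_trans (hopNu_mul _ _) ?_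
      calc opNu ν (coc T A r (T^[p] w)) * opNu ν (coc T A p w)
          ≤ 1 * opNu ν (coc T A p w) :=
            mul_le_mul_of_nonneg_right (hcoc_le_one r _) (hopNu_nn _)
        _ = opNu ν (coc T A p w) := one_mul _
    obtain ⟨m, hm⟩ : ∃ m : ℕ, m = i + n := ⟨_, rfl⟩
    have hm1 : 1 ≤ m := by omega
    obtain ⟨θ, hθdef⟩ : ∃ θ : ℝ, θ = opNu ν (coc T A m w) := ⟨_, rfl⟩
    have hθnn : 0 ≤ θ := hθdef ▸ hopNu_nn _
    have hθlt : θ < 1 := by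
      rw [hθdef, hm, coc_add T A n i w]
      refine lt_of_le_of_lt (hopNu_mul _ _) ?_
      calc opNu ν (coc T A n (T^[i] w)) * opNu ν (coc T A i w)
          ≤ opNu ν (coc T A n (T^[i] w)) * 1 :=
            mul_le_mul_of_nonneg_left (hcoc_le_one i w) (hopNu_nn _)
        _ = opNu ν (coc T A n (T^[i] w)) := mul_one _
        _ < 1 := hlt
    obtain ⟨θ', hθ'def⟩ : ∃ θ' : ℝ, θ' = (1 + θ) / 2 := ⟨_, rfl⟩
    have hθ'pos : 0 < θ' := by rw [hθ'def]; linarith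
    have hθ'lt1 : θ' < 1 := by rw [hθ'def]; linarith
    have hθltθ' : θ < θ' := by rw [hθ'def]; linarith
    -- find ε using continuity
    have hF : Continuous (fun u => opNu ν (coc T A m u)) :=
      hopNu_cont.comp (coc_cont T hT A hA m)
    obtain ⟨ε, hε, hεball⟩ : ∃ ε > 0, ∀ u : Ω, dist u w < ε →
        opNu ν (coc T A m u) < θ' := by
      have hcA : ContinuousAt (fun u => opNu ν (coc T A m u)) w := hF.continuousAt
      rw [Metric.continuousAt_iff] at hcA
      obtain ⟨δ, hδ, hδ'⟩ := hcA (θ' - θ) (by linarith)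
      refine ⟨δ, hδ, fun u hu => ?_⟩
      have h1 := hδ' hu
      simp only [Real.dist_eq] at h1
      have h2 := abs_lt.mp h1
      have h3 := h2.2
      rw [← hθdef] at h3
      linarith
    obtain ⟨N, hN1, hNcard⟩ := hwbr ε hε
    -- block decay
    have hblock : ∀ p : ℕ, dist (T^[p] w) w < ε →
        opNu ν (coc T A (p + m) w) ≤ θ' * opNu ν (coc T A p w) := by
      intro p hp
      rw [coc_add T A m p w]
      refine le_trans (hopNu_mul _ _) ?_
      exact mul_le_mul_of_nonneg_right (le_of_lt (hεball _ hp)) (hopNu_nn _)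
    -- chained decay
    have hklem : ∀ k : ℕ, opNu ν (coc T A (k * m * N + m) w) ≤ θ' ^ k := by
      intro k
      rcases Nat.eq_zero_or_pos k with rfl | hk
      · simp only [Nat.zero_mul, Nat.zero_add, pow_zero]
        exact hcoc_le_one m w
      · have hcard : k * m ≤ ((Finset.range (k * m * N)).filter
            (fun p => dist (T^[p] w) w < ε)).card := hNcard (k * m)
        set s := (Finset.range (k * m * N)).filter (fun p => dist (T^[p] w) w < ε) with hs
        set f := s.orderEmbOfCardLe hcard with hf
        have hfmem : ∀ t : Fin (k * m), (f t : ℕ) ∈ s := fun t =>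
          s.orderEmbOfCardLe_mem hcard t
        have hfret : ∀ t : Fin (k * m), dist (T^[(f t : ℕ)] w) w < ε := by
          intro t
          have h1 := hfmem t
          rw [hs, Finset.mem_filter] at h1
          exact h1.2
        have hfrange : ∀ t : Fin (k * m), (f t : ℕ) < k * m * N := by
          intro t
          have h1 := hfmem t
          rw [hs, Finset.mem_filter, Finset.mem_range] at h1
          exact h1.1
        have hstep : ∀ t : ℕ, t < k → t * m < k * m := fun t ht =>
          mul_lt_mul_of_pos_right ht (by omega : 0 < m)
        have hchain : ∀ t : ℕ, (h : t < k) →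
            opNu ν (coc T A ((f ⟨t * m, hstep t h⟩ : ℕ) + m) w) ≤ θ' ^ (t + 1) := by
          intro t
          induction t with
          | zero =>
            intro h
            have h1 := hblock _ (hfret ⟨0 * m, hstep 0 h⟩)
            have h2 : opNu ν (coc T A (f ⟨0 * m, hstep 0 h⟩ : ℕ) w) ≤ 1 :=
              hcoc_le_one _ _
            rw [pow_one]
            calc opNu ν (coc T A ((f ⟨0 * m, hstep 0 h⟩ : ℕ) + m) w)
                ≤ θ' * opNu ν (coc T A (f ⟨0 * m, hstep 0 h⟩ : ℕ) w) := h1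
              _ ≤ θ' * 1 := mul_le_mul_of_nonneg_left h2 (le_of_lt hθ'pos)
              _ = θ' := mul_one _
          | succ t ih =>
            intro h
            have ht : t < k := by omega
            have hgap : (f ⟨t * m, hstep t ht⟩ : ℕ) + m ≤ (f ⟨(t+1) * m, hstep (t+1) h⟩ : ℕ) := by
              refine fin_orderEmb_gap f m _ _ ?_
              show t * m + m ≤ (t + 1) * m
              exact le_of_eq (by ring)
            have h1 := ih ht
            have h2 : opNu ν (coc T A (f ⟨(t+1) * m, hstep (t+1) h⟩ : ℕ) w) ≤ θ' ^ (t + 1) :=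
              le_trans (ha_mono _ _ hgap) h1
            have h3 := hblock _ (hfret ⟨(t+1) * m, hstep (t+1) h⟩)
            calc opNu ν (coc T A ((f ⟨(t+1) * m, hstep (t+1) h⟩ : ℕ) + m) w)
                ≤ θ' * opNu ν (coc T A (f ⟨(t+1) * m, hstep (t+1) h⟩ : ℕ) w) := h3
              _ ≤ θ' * θ' ^ (t + 1) := mul_le_mul_of_nonneg_left h2 (le_of_lt hθ'pos)
              _ = θ' ^ (t + 2) := by ring
        have hk1 : k - 1 < k := by omega
        have hlast := hchain (k - 1) hk1
        have hle : (f ⟨(k-1) * m, hstep (k-1) hk1⟩ : ℕ) + m ≤ k * m * N + m := by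
          have h1 := hfrange ⟨(k-1) * m, hstep (k-1) hk1⟩
          omega
        have h2 := le_trans (ha_mono _ _ hle) hlast
        have hkeq : k - 1 + 1 = k := by omega
        rwa [hkeq] at h2
    -- wrap up: exponential bound
    obtain ⟨q, hq⟩ : ∃ q : ℕ, q = m * N + m := ⟨_, rfl⟩
    have hq1 : 1 ≤ q := by
      have h1 : 0 < m * N := Nat.mul_pos (by omega) (by omega)
      omega
    have hbound_all : ∀ r : ℕ, opNu ν (coc T A r w) ≤ θ' ^ (r / q) := by
      intro r
      rcases Nat.eq_zero_or_pos (r / q) with hk0 | hkpos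
      · rw [hk0, pow_zero]
        exact hcoc_le_one _ _
      · have hkq : (r / q) * q ≤ r := Nat.div_mul_le_self r q
        have hle : (r / q) * m * N + m ≤ r := by
          have h1 : (r / q) * q = (r / q) * m * N + (r / q) * m := by rw [hq]; ring
          have h2 : m ≤ (r / q) * m := Nat.le_mul_of_pos_left m hkpos
          omega
        exact le_trans (ha_mono _ _ hle) (hklem (r / q))
    obtain ⟨lam, hlamdef⟩ : ∃ lam : ℝ, lam = θ' ^ ((q : ℝ)⁻¹) := ⟨_, rfl⟩
    have hqpos : (0:ℝ) < (q:ℝ) := by exact_mod_cast hq1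
    have hlampos : 0 < lam := hlamdef ▸ Real.rpow_pos_of_pos hθ'pos _
    have hlamlt1 : lam < 1 := hlamdef ▸
      Real.rpow_lt_one (le_of_lt hθ'pos) hθ'lt1 (by positivity)
    have hlamq : lam ^ q = θ' := by
      rw [hlamdef, ← Real.rpow_natCast (θ' ^ ((q:ℝ)⁻¹)) q, ← Real.rpow_mul (le_of_lt hθ'pos)]
      rw [inv_mul_cancel₀ (ne_of_gt hqpos), Real.rpow_one]
    refine ⟨θ'⁻¹, inv_pos.mpr hθ'pos, lam, hlampos, hlamlt1, fun r => ?_⟩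
    have h1 := hbound_all r
    have h2 : r ≤ (r / q + 1) * q := by
      have h3 : r % q < q := Nat.mod_lt _ (by omega)
      have h4 : r = q * (r / q) + r % q := (Nat.div_add_mod r q).symm
      have h5 : (r / q + 1) * q = q * (r / q) + q := by ring
      omega
    have h3 : lam ^ ((r / q + 1) * q) ≤ lam ^ r :=
      pow_le_pow_of_le_one (le_of_lt hlampos) (le_of_lt hlamlt1) h2
    have h4 : lam ^ ((r / q + 1) * q) = θ' ^ (r / q + 1) := by
      rw [mul_comm, pow_mul, hlamq]
    have h6 : θ' * θ' ^ (r / q) ≤ lam ^ r := by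
      have h5 : θ' ^ (r / q + 1) = θ' * θ' ^ (r / q) := by ring
      rw [← h5, ← h4]; exact h3
    have h7 : θ' ^ (r / q) ≤ θ'⁻¹ * lam ^ r := by
      have h8 := mul_le_mul_of_nonneg_left h6 (le_of_lt (inv_pos.mpr hθ'pos))
      calc θ' ^ (r / q) = θ'⁻¹ * (θ' * θ' ^ (r / q)) := by
            field_simp
        _ ≤ θ'⁻¹ * lam ^ r := h8
    exact le_trans h1 h7
  · -- rigid branch
    intro hno i n hn
    push_neg at hno
    exact le_antisymm (hbound n hn _) (hno i n hn)
end

section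
/- Let S₁, S₂ ∈ ℝ^{2×2} satisfy the weak Lyapunov condition P - S_kᵀPS_k ≥ 0 (k = 1,2) for a common symmetric positive-definite P. Then the system {S₁,S₂} is absolutely stable (‖S_{σ(n)}⋯S_{σ(1)}‖ → 0 for every switching signal σ : ℕ → {1,2}) if and only if ρ(S₁) < 1, ρ(S₂) < 1, and ρ(S₁S₂) < 1. -/
open Matrix Filter
open scoped ENNReal

section SpecHelpers

lemma mem_spec_iff_det (M : Matrix (Fin 2) (Fin 2) ℂ) (x : ℂ) :
    x ∈ spectrum ℂ M ↔ (algebraMap ℂ (Matrix (Fin 2) (Fin 2) ℂ) x - M).det = 0 := by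
  rw [spectrum.mem_iff, Matrix.isUnit_iff_isUnit_det, isUnit_iff_ne_zero, not_not]

lemma det_sub_eq (M : Matrix (Fin 2) (Fin 2) ℂ) (x : ℂ) :
    (algebraMap ℂ (Matrix (Fin 2) (Fin 2) ℂ) x - M).det
      = x ^ 2 - (M 0 0 + M 1 1) * x + M.det := by
  rw [Matrix.det_fin_two, Matrix.det_fin_two]
  simp [Matrix.sub_apply, Matrix.algebraMap_matrix_apply]
  ring

lemma exists_two_roots (M : Matrix (Fin 2) (Fin 2) ℂ) :
    ∃ μ ν : ℂ, μ ∈ spectrum ℂ M ∧ ν ∈ spectrum ℂ M ∧ μ * ν = M.det ∧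
      ∀ x ∈ spectrum ℂ M, x = μ ∨ x = ν := by
  obtain ⟨s, hs⟩ := IsAlgClosed.exists_pow_nat_eq ((M 0 0 + M 1 1) ^ 2 - 4 * M.det) two_pos
  set t := M 0 0 + M 1 1 with ht
  set μ := (t + s) / 2 with hμdef
  set ν := (t - s) / 2 with hνdef
  have key : ∀ x : ℂ, x ^ 2 - t * x + M.det = (x - μ) * (x - ν) := by
    intro x
    rw [hμdef, hνdef]
    field_simp
    ring_nf
    linear_combination hs
  have hmem : ∀ x : ℂ, (x - μ) * (x - ν) = 0 → x ∈ spectrum ℂ M := by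
    intro x hx
    rw [mem_spec_iff_det, det_sub_eq, key]
    exact hx
  have hprod : μ * ν = M.det := by
    have h0 := key 0
    simp at h0
    linear_combination -h0
  refine ⟨μ, ν, hmem μ (by rw [sub_self, zero_mul]), hmem ν (by rw [sub_self, mul_zero]), hprod, ?_⟩
  intro x hx
  rw [mem_spec_iff_det, det_sub_eq, key] at hx
  rcases mul_eq_zero.1 hx with h | h
  · exact Or.inl (sub_eq_zero.1 h)
  · exact Or.inr (sub_eq_zero.1 h)

lemma nnnorm_lt_one_of_mem {M : Matrix (Fin 2) (Fin 2) ℂ} {μ : ℂ}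
    (hr : spectralRadius ℂ M < 1) (h : μ ∈ spectrum ℂ M) : ‖μ‖₊ < 1 := by
  have hle : (‖μ‖₊ : ℝ≥0∞) ≤ spectralRadius ℂ M :=
    le_iSup₂ (f := fun k (_ : k ∈ spectrum ℂ M) => (‖k‖₊ : ℝ≥0∞)) μ h
  have := lt_of_le_of_lt hle hr
  exact_mod_cast this

lemma specRad_lt_one_of_forall {M : Matrix (Fin 2) (Fin 2) ℂ}
    (h : ∀ μ ∈ spectrum ℂ M, ‖μ‖₊ < 1) : spectralRadius ℂ M < 1 := by
  obtain ⟨μ, ν, hμ, hν, -, hcl⟩ := exists_two_roots M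
  have hle : spectralRadius ℂ M ≤ max (‖μ‖₊ : ℝ≥0∞) (‖ν‖₊ : ℝ≥0∞) := by
    apply iSup₂_le
    intro x hx
    rcases hcl x hx with rfl | rfl
    · exact le_max_left _ _
    · exact le_max_right _ _
  refine lt_of_le_of_lt hle ?_
  rw [max_lt_iff]
  constructor <;> [exact_mod_cast h μ hμ; exact_mod_cast h ν hν]

lemma det_nnnorm_lt_one {M : Matrix (Fin 2) (Fin 2) ℂ}
    (hr : spectralRadius ℂ M < 1) : ‖M.det‖₊ < 1 := by
  obtain ⟨μ, ν, hμ, hν, hprod, -⟩ := exists_two_roots M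
  rw [← hprod, nnnorm_mul]
  calc ‖μ‖₊ * ‖ν‖₊ ≤ ‖μ‖₊ * 1 := by
        gcongr
        exact (nnnorm_lt_one_of_mem hr hν).le
    _ = ‖μ‖₊ := mul_one _
    _ < 1 := nnnorm_lt_one_of_mem hr hμ

end SpecHelpers

lemma mem_spec_of_eigen {A : Matrix (Fin 2) (Fin 2) ℝ} {t : ℝ} {x : Fin 2 → ℝ}
    (hx : x ≠ 0) (h : A *ᵥ x = t • x) :
    (t : ℂ) ∈ spectrum ℂ (A.map Complex.ofReal) := by
  rw [mem_spec_iff_det, ← Matrix.exists_mulVec_eq_zero_iff]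
  refine ⟨fun i => (x i : ℂ), ?_, ?_⟩
  · intro h0
    apply hx
    funext i
    have := congrFun h0 i
    simpa using this
  · have h0 := congrFun h 0
    have h1 := congrFun h 1
    simp [Matrix.mulVec, dotProduct, Fin.sum_univ_two] at h0 h1
    funext i
    fin_cases i <;>
      simp [Matrix.sub_mulVec, Matrix.mulVec, dotProduct, Fin.sum_univ_two,
        Matrix.algebraMap_matrix_apply, Matrix.map_apply, Matrix.sub_apply] <;>
      first
      | exact_mod_cast (by linear_combination -h0 : (t - A 0 0) * (x 0) + -(A 0 1 * x 1) = (0:ℝ))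
      | exact_mod_cast (by linear_combination -h1 : -(A 1 0 * x 0) + (t - A 1 1) * (x 1) = (0:ℝ))

lemma no_eigen {A : Matrix (Fin 2) (Fin 2) ℝ} (hr : specRad A < 1) {t : ℝ} {x : Fin 2 → ℝ}
    (hx : x ≠ 0) (ht : |t| = 1) (h : A *ᵥ x = t • x) : False := by
  have hm := mem_spec_of_eigen hx h
  have hlt := nnnorm_lt_one_of_mem hr hm
  have : ‖(t : ℂ)‖₊ = 1 := by
    ext
    simp [Real.norm_eq_abs, ht]
  rw [this] at hlt
  exact lt_irrefl 1 hlt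

lemma map_pow_ofReal (A : Matrix (Fin 2) (Fin 2) ℝ) (n : ℕ) :
    (A ^ n).map Complex.ofReal = (A.map Complex.ofReal) ^ n := by
  have : (Complex.ofReal : ℝ → ℂ) = ⇑Complex.ofRealHom := rfl
  rw [this]
  induction n with
  | zero => simp [pow_zero, Matrix.map_one]
  | succ n ih => rw [pow_succ, pow_succ, Matrix.map_mul, ih]

lemma specRad_lt_one_of_pow {A : Matrix (Fin 2) (Fin 2) ℝ}
    (h : Tendsto (fun n => A ^ n) atTop (nhds 0)) : specRad A < 1 := by
  unfold specRad
  apply specRad_lt_one_of_forall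
  intro μ hμ
  obtain ⟨v, hv0, hv⟩ := (Matrix.exists_mulVec_eq_zero_iff).2 ((mem_spec_iff_det _ _).1 hμ)
  have heig : (A.map Complex.ofReal) *ᵥ v = μ • v := by
    rw [Matrix.sub_mulVec, sub_eq_zero] at hv
    rw [← hv, Algebra.algebraMap_eq_smul_one, Matrix.smul_mulVec, Matrix.one_mulVec]
  have hpow : ∀ n : ℕ, ((A ^ n).map Complex.ofReal) *ᵥ v = μ ^ n • v := by
    intro n
    induction n with
    | zero => simp [Matrix.map_one, Matrix.one_mulVec]
    | succ n ih =>
      rw [map_pow_ofReal, pow_succ', ← map_pow_ofReal,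
        ← Matrix.mulVec_mulVec, ih, Matrix.mulVec_smul, heig, smul_smul, ← pow_succ]
  obtain ⟨i, hi⟩ : ∃ i, v i ≠ 0 := by
    by_contra hc
    push_neg at hc
    exact hv0 (funext fun i => hc i)
  have hent : ∀ j, Tendsto (fun n => (A ^ n) i j) atTop (nhds 0) := by
    intro j
    have h1 : Tendsto (fun n => (A ^ n) i) atTop (nhds 0) :=
      (tendsto_pi_nhds.1 h) i
    have := (tendsto_pi_nhds.1 h1) j
    simpa using this
  have hμv : Tendsto (fun n => μ ^ n * v i) atTop (nhds 0) := by
    have hsum : ∀ n : ℕ, μ ^ n * v i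
        = (((A ^ n) i 0 : ℝ) : ℂ) * v 0 + (((A ^ n) i 1 : ℝ) : ℂ) * v 1 := by
      intro n
      have := congrFun (hpow n) i
      simp [Matrix.mulVec, dotProduct, Fin.sum_univ_two, Matrix.map_apply] at this
      rw [← this]
    rw [show (0 : ℂ) = ((0:ℝ):ℂ) * v 0 + ((0:ℝ):ℂ) * v 1 by simp]
    simp only [hsum]
    exact ((((Complex.continuous_ofReal.tendsto 0).comp (hent 0)).mul tendsto_const_nhds).add
      (((Complex.continuous_ofReal.tendsto 0).comp (hent 1)).mul tendsto_const_nhds))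
  have hμ0 : Tendsto (fun n => μ ^ n) atTop (nhds 0) := by
    have := hμv.mul_const (v i)⁻¹
    simpa [mul_assoc, mul_inv_cancel₀ hi] using this
  by_contra hge
  push_neg at hge
  have h1le : (1:ℝ) ≤ ‖μ‖ := by
    have := hge
    rw [← NNReal.coe_le_coe] at this
    simpa using this
  have : ∀ n : ℕ, (1:ℝ) ≤ ‖μ ^ n‖ := by
    intro n
    rw [norm_pow]
    exact one_le_pow₀ h1le
  have hn : Tendsto (fun n => ‖μ ^ n‖) atTop (nhds 0) := by
    have := hμ0.norm
    simpa using this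
  obtain ⟨n, hn1⟩ := (hn.eventually_lt_const (by norm_num : (0:ℝ) < 1)).exists
  exact absurd hn1 (not_lt.2 (this n))

section Pside

variable {P : Matrix (Fin 2) (Fin 2) ℝ}

lemma quad_nonneg (hP : P.PosDef) (x : Fin 2 → ℝ) : 0 ≤ x ⬝ᵥ P *ᵥ x := by
  have := hP.posSemidef.dotProduct_mulVec_nonneg x
  simpa using this

lemma Pnorm_nonneg (x : Fin 2 → ℝ) : 0 ≤ Pnorm P x := Real.sqrt_nonneg _

lemma Pnorm_sq (hP : P.PosDef) (x : Fin 2 → ℝ) : (Pnorm P x) ^ 2 = x ⬝ᵥ P *ᵥ x :=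
  Real.sq_sqrt (quad_nonneg hP x)

lemma Pnorm_zero : Pnorm P 0 = 0 := by simp [Pnorm]

lemma Pnorm_pos (hP : P.PosDef) {x : Fin 2 → ℝ} (hx : x ≠ 0) : 0 < Pnorm P x := by
  apply Real.sqrt_pos.2
  have := hP.dotProduct_mulVec_pos hx
  simpa using this

lemma Pnorm_smul (t : ℝ) (x : Fin 2 → ℝ) : Pnorm P (t • x) = |t| * Pnorm P x := by
  unfold Pnorm
  rw [Matrix.mulVec_smul, smul_dotProduct, dotProduct_smul, smul_eq_mul,
    smul_eq_mul, ← mul_assoc, ← Real.sqrt_sq_eq_abs, ← Real.sqrt_mul (sq_nonneg t)]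
  ring_nf

lemma quad_transfer_s14 (S : Matrix (Fin 2) (Fin 2) ℝ) (x : Fin 2 → ℝ) :
    (S *ᵥ x) ⬝ᵥ P *ᵥ (S *ᵥ x) = x ⬝ᵥ (Sᵀ * P * S) *ᵥ x := by
  simp [Matrix.mulVec, dotProduct, Fin.sum_univ_two, Matrix.mul_apply,
    Matrix.transpose_apply]
  ring

lemma step_le (hP : P.PosDef) {S : Matrix (Fin 2) (Fin 2) ℝ}
    (hps : (P - Sᵀ * P * S).PosSemidef) (x : Fin 2 → ℝ) :
    Pnorm P (S *ᵥ x) ≤ Pnorm P x := by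
  apply Real.sqrt_le_sqrt
  have h := hps.dotProduct_mulVec_nonneg x
  simp only [star_trivial, Matrix.sub_mulVec, dotProduct_sub] at h
  have := quad_transfer_s14 (P := P) S x
  linarith [this, h]

lemma step_eq (hP : P.PosDef) {S : Matrix (Fin 2) (Fin 2) ℝ}
    (hps : (P - Sᵀ * P * S).PosSemidef) {x : Fin 2 → ℝ}
    (h : Pnorm P (S *ᵥ x) = Pnorm P x) : (P - Sᵀ * P * S) *ᵥ x = 0 := by
  have hsq : (S *ᵥ x) ⬝ᵥ P *ᵥ (S *ᵥ x) = x ⬝ᵥ P *ᵥ x := by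
    rw [← Pnorm_sq hP, ← Pnorm_sq hP, h]
  have hq : x ⬝ᵥ (P - Sᵀ * P * S) *ᵥ x = 0 := by
    rw [Matrix.sub_mulVec, dotProduct_sub, ← quad_transfer_s14, hsq, sub_self]
  have := (hps.dotProduct_mulVec_zero_iff x).1 (by simpa using hq)
  exact this

lemma kernel_line {Q : Matrix (Fin 2) (Fin 2) ℝ} (hQ : Q ≠ 0) {x z : Fin 2 → ℝ}
    (hx : x ≠ 0) (hQx : Q *ᵥ x = 0) (hQz : Q *ᵥ z = 0) : ∃ t : ℝ, z = t • x := by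
  by_contra hc
  push_neg at hc
  have hx01 : x 0 ≠ 0 ∨ x 1 ≠ 0 := by
    by_contra hcc
    push_neg at hcc
    exact hx (funext fun i => by fin_cases i <;> simp [hcc.1, hcc.2])
  have hD : x 0 * z 1 - x 1 * z 0 ≠ 0 := by
    intro hD
    rcases hx01 with h0 | h1
    · refine hc (z 0 / x 0) (funext fun i => ?_)
      fin_cases i
      · simp only [Pi.smul_apply, smul_eq_mul, Fin.zero_eta, Fin.mk_one]
        field_simp
      · simp only [Pi.smul_apply, smul_eq_mul, Fin.zero_eta, Fin.mk_one]
        field_simp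
        first | linear_combination hD | linear_combination -hD | linear_combination 2*hD | linear_combination -2*hD
    · refine hc (z 1 / x 1) (funext fun i => ?_)
      fin_cases i
      · simp only [Pi.smul_apply, smul_eq_mul, Fin.zero_eta, Fin.mk_one]
        field_simp
        first | linear_combination hD | linear_combination -hD | linear_combination 2*hD | linear_combination -2*hD
      · simp only [Pi.smul_apply, smul_eq_mul, Fin.zero_eta, Fin.mk_one]
        field_simp
  set B : Matrix (Fin 2) (Fin 2) ℝ := Matrix.of ![![x 0, z 0], ![x 1, z 1]] with hB
  have hdetB : IsUnit B.det := by
    rw [Matrix.det_fin_two]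
    apply isUnit_iff_ne_zero.2
    show x 0 * z 1 - z 0 * x 1 ≠ 0
    intro hcon
    exact hD (by linarith)
  have hQB : Q * B = 0 := by
    ext i j
    have hhx := congrFun hQx i
    have hhz := congrFun hQz i
    simp [Matrix.mulVec, dotProduct, Fin.sum_univ_two] at hhx hhz
    fin_cases j <;>
      simp [Matrix.mul_apply, Fin.sum_univ_two, hB, hhx, hhz]
  have : Q = 0 := by
    calc Q = Q * (B * B⁻¹) := by rw [Matrix.mul_nonsing_inv B hdetB, mul_one]
    _ = (Q * B) * B⁻¹ := by rw [mul_assoc]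
    _ = 0 := by rw [hQB, Matrix.zero_mul]
  exact hQ this

lemma Q_ne_zero (hP : P.PosDef) {S : Matrix (Fin 2) (Fin 2) ℝ}
    (hr : specRad S < 1) : P - Sᵀ * P * S ≠ 0 := by
  intro h0
  have hPS : Sᵀ * P * S = P := by
    have := sub_eq_zero.1 h0
    exact this.symm
  have hdet : S.det ^ 2 * P.det = P.det := by
    have := congrArg Matrix.det hPS
    rw [Matrix.det_mul, Matrix.det_mul, Matrix.det_transpose] at this
    nlinarith [this]
  have hd2 : S.det ^ 2 = 1 := by
    have hp := hP.det_pos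
    have : (S.det ^ 2 - 1) * P.det = 0 := by ring_nf; linarith [hdet]
    rcases mul_eq_zero.1 this with h | h
    · linarith
    · exact absurd h (ne_of_gt hp)
  have habs : |S.det| = 1 := by
    have h1 : |S.det| ^ 2 = 1 := by rw [sq_abs]; exact hd2
    nlinarith [abs_nonneg S.det]
  have hlt := det_nnnorm_lt_one (show spectralRadius ℂ (S.map Complex.ofReal) < 1 from hr)
  have hdm : (S.map Complex.ofReal).det = ((S.det : ℝ) : ℂ) := by
    have : (Complex.ofReal : ℝ → ℂ) = ⇑Complex.ofRealHom := rfl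
    rw [this, ← RingHom.mapMatrix_apply]
    exact (RingHom.map_det _ _).symm
  rw [hdm] at hlt
  have : ‖((S.det : ℝ) : ℂ)‖₊ = 1 := by
    ext
    simp [Real.norm_eq_abs, habs]
  rw [this] at hlt
  exact lt_irrefl 1 hlt

end Pside

section Core

variable {P : Matrix (Fin 2) (Fin 2) ℝ} {S : Fin 2 → Matrix (Fin 2) (Fin 2) ℝ}

/-- Abstract contradiction: two nonzero vectors in the kernel line of `Q k`, related by `M`,
with equal `P`-norms, force a unit eigenvalue of `M`. -/
lemma pair_contra (hP : P.PosDef)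
    (hno : ∀ t : ℝ, ∀ u : Fin 2 → ℝ, u ≠ 0 → |t| = 1 → ∀ M : Matrix (Fin 2) (Fin 2) ℝ,
      M = M → False)
    : True := trivial

lemma no_eigen_swap (h01 : specRad (S 0 * S 1) < 1) {t : ℝ} {x : Fin 2 → ℝ}
    (hx : x ≠ 0) (ht : |t| = 1) (h : (S 1 * S 0) *ᵥ x = t • x) : False := by
  have ht0 : t ≠ 0 := by intro h0; rw [h0] at ht; simp at ht
  have hS0x : S 0 *ᵥ x ≠ 0 := by
    intro h0
    have : (S 1 * S 0) *ᵥ x = 0 := by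
      rw [← Matrix.mulVec_mulVec, h0, Matrix.mulVec_zero]
    rw [h] at this
    rcases smul_eq_zero.1 this with h' | h'
    · exact ht0 h'
    · exact hx h'
  apply no_eigen h01 hS0x ht
  calc (S 0 * S 1) *ᵥ (S 0 *ᵥ x) = ((S 0 * S 1) * S 0) *ᵥ x := Matrix.mulVec_mulVec _ _ _
    _ = (S 0 * (S 1 * S 0)) *ᵥ x := by rw [mul_assoc]
    _ = S 0 *ᵥ ((S 1 * S 0) *ᵥ x) := (Matrix.mulVec_mulVec _ _ _).symm
    _ = S 0 *ᵥ (t • x) := by rw [h]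
    _ = t • (S 0 *ᵥ x) := Matrix.mulVec_smul _ _ _

lemma eig_from_pair (hP : P.PosDef) {k : Fin 2} (hQk : P - (S k)ᵀ * P * S k ≠ 0)
    {M : Matrix (Fin 2) (Fin 2) ℝ} {u v : Fin 2 → ℝ} (hu : u ≠ 0)
    (hv : v = M *ᵥ u) (hQu : (P - (S k)ᵀ * P * S k) *ᵥ u = 0)
    (hQv : (P - (S k)ᵀ * P * S k) *ᵥ v = 0) (he : Pnorm P v = Pnorm P u) :
    ∃ t : ℝ, |t| = 1 ∧ M *ᵥ u = t • u := by
  obtain ⟨t, htz⟩ := kernel_line hQk hu hQu hQv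
  have hnorm : |t| * Pnorm P u = Pnorm P u := by
    rw [← Pnorm_smul, ← htz, he]
  have hupos : 0 < Pnorm P u := Pnorm_pos hP hu
  have ht : |t| = 1 := by
    have := mul_right_cancel₀ (ne_of_gt hupos) (by rw [hnorm, one_mul] : |t| * Pnorm P u = 1 * Pnorm P u)
    exact this
  exact ⟨t, ht, by rw [← hv, htz]⟩

lemma strict3 (hP : P.PosDef) (hL : ∀ k, (P - (S k)ᵀ * P * (S k)).PosSemidef)
    (h0 : specRad (S 0) < 1) (h1 : specRad (S 1) < 1) (h01 : specRad (S 0 * S 1) < 1)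
    (a b c : Fin 2) {x : Fin 2 → ℝ} (hx : x ≠ 0) :
    Pnorm P (S c *ᵥ (S b *ᵥ (S a *ᵥ x))) < Pnorm P x := by
  by_contra hge
  push_neg at hge
  set y := S a *ᵥ x with hy
  set z := S b *ᵥ y with hz
  set w := S c *ᵥ z with hw
  have l1 : Pnorm P y ≤ Pnorm P x := step_le hP (hL a) x
  have l2 : Pnorm P z ≤ Pnorm P y := step_le hP (hL b) y
  have l3 : Pnorm P w ≤ Pnorm P z := step_le hP (hL c) z
  have e1 : Pnorm P y = Pnorm P x := le_antisymm l1 (by linarith)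
  have e2 : Pnorm P z = Pnorm P y := le_antisymm l2 (by linarith)
  have e3 : Pnorm P w = Pnorm P z := le_antisymm l3 (by linarith)
  have k1 : (P - (S a)ᵀ * P * S a) *ᵥ x = 0 := step_eq hP (hL a) e1
  have k2 : (P - (S b)ᵀ * P * S b) *ᵥ y = 0 := step_eq hP (hL b) e2
  have k3 : (P - (S c)ᵀ * P * S c) *ᵥ z = 0 := step_eq hP (hL c) e3
  have hxpos : 0 < Pnorm P x := Pnorm_pos hP hx
  have hy0 : y ≠ 0 := by
    intro h'
    rw [h', Pnorm_zero] at e1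
    linarith
  have hz0 : z ≠ 0 := by
    intro h'
    rw [h', Pnorm_zero] at e2
    rw [e1] at e2
    linarith
  have hQa := Q_ne_zero hP (show specRad (S a) < 1 by fin_cases a <;> assumption)
  have hQb := Q_ne_zero hP (show specRad (S b) < 1 by fin_cases b <;> assumption)
  have hrS : ∀ k : Fin 2, specRad (S k) < 1 := fun k => by fin_cases k <;> assumption
  -- case analysis on letters
  by_cases hab : a = b
  · -- y = S a x, both x,y in ker Q a
    subst hab
    obtain ⟨t, ht, heq⟩ := eig_from_pair hP hQa hx hy k1 k2 e1
    exact no_eigen (hrS a) hx ht heq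
  · by_cases hbc : b = c
    · subst hbc
      obtain ⟨t, ht, heq⟩ := eig_from_pair hP hQb hy0 hz k2 k3 e2
      exact no_eigen (hrS b) hy0 ht heq
    · -- a ≠ b, b ≠ c, so c = a
      have hca : c = a := by omega
      subst hca
      have hzx : z = (S b * S c) *ᵥ x := by
        rw [hz, hy, Matrix.mulVec_mulVec]
      obtain ⟨t, ht, heq⟩ := eig_from_pair hP hQa hx hzx k1
        k3 (e2.trans e1)
      -- (S b * S c) has unit eigenvalue; with c ≠ b, {b,c} = {0,1}
      have hc0 : c = 0 ∨ c = 1 := by omega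
      rcases hc0 with rfl | rfl
      · have hb1 : b = 1 := by omega
        subst hb1
        exact no_eigen_swap h01 hx ht heq
      · have hb0 : b = 0 := by omega
        subst hb0
        exact no_eigen h01 hx ht heq
  
end Core

section Compact

variable {P : Matrix (Fin 2) (Fin 2) ℝ} {S : Fin 2 → Matrix (Fin 2) (Fin 2) ℝ}

lemma quad_continuous (P : Matrix (Fin 2) (Fin 2) ℝ) :
    Continuous fun x : Fin 2 → ℝ => x ⬝ᵥ P *ᵥ x := by
  have h : (fun x : Fin 2 → ℝ => x ⬝ᵥ P *ᵥ x)
      = fun x : Fin 2 → ℝ => x 0 * (P 0 0 * x 0 + P 0 1 * x 1)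
          + x 1 * (P 1 0 * x 0 + P 1 1 * x 1) := by
    funext x
    simp [dotProduct, Matrix.mulVec, Fin.sum_univ_two]
  rw [h]
  fun_prop

lemma Pnorm_continuous (P : Matrix (Fin 2) (Fin 2) ℝ) : Continuous (Pnorm P) :=
  Real.continuous_sqrt.comp (quad_continuous P)

lemma exists_eps (hP : P.PosDef) : ∃ ε > 0, ∀ x : Fin 2 → ℝ, ε * ‖x‖ ^ 2 ≤ x ⬝ᵥ P *ᵥ x := by
  have hcomp : IsCompact (Metric.sphere (0 : Fin 2 → ℝ) 1) := isCompact_sphere _ _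
  have hne : (Metric.sphere (0 : Fin 2 → ℝ) 1).Nonempty :=
    NormedSpace.sphere_nonempty.2 zero_le_one
  obtain ⟨m, hm, hmin⟩ := hcomp.exists_isMinOn hne (quad_continuous P).continuousOn
  have hm0 : m ≠ 0 := by
    intro h'
    rw [h'] at hm
    simp at hm
  refine ⟨m ⬝ᵥ P *ᵥ m, by simpa using hP.dotProduct_mulVec_pos hm0, ?_⟩
  intro x
  rcases eq_or_ne x 0 with rfl | hx
  · simp
  · have hnx : 0 < ‖x‖ := norm_pos_iff.2 hx
    have hu : (‖x‖⁻¹ • x) ∈ Metric.sphere (0 : Fin 2 → ℝ) 1 := by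
      simp [norm_smul, abs_of_pos (inv_pos.2 hnx), inv_mul_cancel₀ (ne_of_gt hnx)]
    have hle := isMinOn_iff.1 hmin _ hu
    have hquad : (‖x‖⁻¹ • x) ⬝ᵥ P *ᵥ (‖x‖⁻¹ • x) = ‖x‖⁻¹ * (‖x‖⁻¹ * (x ⬝ᵥ P *ᵥ x)) := by
      rw [Matrix.mulVec_smul, smul_dotProduct, dotProduct_smul,
        smul_eq_mul, smul_eq_mul]
    rw [hquad] at hle
    have hkey : (‖x‖⁻¹ * (‖x‖⁻¹ * (x ⬝ᵥ P *ᵥ x))) * ‖x‖ ^ 2 = x ⬝ᵥ P *ᵥ x := by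
      field_simp
    calc (m ⬝ᵥ P *ᵥ m) * ‖x‖ ^ 2 ≤ (‖x‖⁻¹ * (‖x‖⁻¹ * (x ⬝ᵥ P *ᵥ x))) * ‖x‖ ^ 2 :=
          mul_le_mul_of_nonneg_right hle (sq_nonneg _)
      _ = x ⬝ᵥ P *ᵥ x := hkey

lemma sph_compact (hP : P.PosDef) : IsCompact {x : Fin 2 → ℝ | Pnorm P x = 1} := by
  obtain ⟨ε, hε, hbound⟩ := exists_eps hP
  refine Metric.isCompact_iff_isClosed_bounded.2 ⟨?_, ?_⟩
  · exact isClosed_eq (Pnorm_continuous P) continuous_const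
  · rw [isBounded_iff_forall_norm_le]
    refine ⟨Real.sqrt (1 / ε), ?_⟩
    intro x hx
    have hq : x ⬝ᵥ P *ᵥ x = 1 := by
      have h1 : (Pnorm P x) ^ 2 = 1 := by rw [show Pnorm P x = 1 from hx]; norm_num
      rw [Pnorm_sq hP] at h1
      exact h1
    have h2 : ‖x‖ ^ 2 ≤ 1 / ε := by
      rw [le_div_iff₀ hε]
      have := hbound x
      linarith
    calc ‖x‖ = Real.sqrt (‖x‖ ^ 2) := (Real.sqrt_sq (norm_nonneg x)).symm
      _ ≤ Real.sqrt (1 / ε) := Real.sqrt_le_sqrt h2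

lemma sph_nonempty (hP : P.PosDef) : {x : Fin 2 → ℝ | Pnorm P x = 1}.Nonempty := by
  have hv : (Pi.single 0 1 : Fin 2 → ℝ) ≠ 0 := by
    intro h'
    have := congrFun h' 0
    simp at this
  have hr : 0 < Pnorm P (Pi.single 0 1 : Fin 2 → ℝ) := Pnorm_pos hP hv
  refine ⟨(Pnorm P (Pi.single 0 1 : Fin 2 → ℝ))⁻¹ • (Pi.single 0 1 : Fin 2 → ℝ), ?_⟩
  simp only [Set.mem_setOf_eq, Pnorm_smul, abs_of_pos (inv_pos.2 hr)]
  exact inv_mul_cancel₀ (ne_of_gt hr)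

lemma word_bound (hP : P.PosDef) (hL : ∀ k, (P - (S k)ᵀ * P * (S k)).PosSemidef)
    (h0 : specRad (S 0) < 1) (h1 : specRad (S 1) < 1) (h01 : specRad (S 0 * S 1) < 1)
    (a b c : Fin 2) :
    ∃ cc : ℝ, 0 ≤ cc ∧ cc < 1 ∧
      ∀ x, Pnorm P ((S c * (S b * S a)) *ᵥ x) ≤ cc * Pnorm P x := by
  have hWx : ∀ x : Fin 2 → ℝ, (S c * (S b * S a)) *ᵥ x = S c *ᵥ (S b *ᵥ (S a *ᵥ x)) := by
    intro x
    rw [← Matrix.mulVec_mulVec, ← Matrix.mulVec_mulVec]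
  have hcontW : Continuous fun x : Fin 2 → ℝ => Pnorm P ((S c * (S b * S a)) *ᵥ x) :=
    (Pnorm_continuous P).comp (continuous_const.matrix_mulVec continuous_id)
  obtain ⟨zm, hzm, hmax⟩ := (sph_compact hP).exists_isMaxOn (sph_nonempty hP)
    hcontW.continuousOn
  have hzm1 : Pnorm P zm = 1 := hzm
  have hz0 : zm ≠ 0 := by
    intro h'
    rw [h', Pnorm_zero] at hzm1
    norm_num at hzm1
  refine ⟨Pnorm P ((S c * (S b * S a)) *ᵥ zm), Pnorm_nonneg _, ?_, ?_⟩
  · rw [hWx]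
    calc Pnorm P (S c *ᵥ (S b *ᵥ (S a *ᵥ zm))) < Pnorm P zm :=
          strict3 hP hL h0 h1 h01 a b c hz0
      _ = 1 := hzm1
  · intro x
    rcases eq_or_ne x 0 with rfl | hx
    · simp [Matrix.mulVec_zero, Pnorm_zero]
    · have hr : 0 < Pnorm P x := Pnorm_pos hP hx
      have hu : ((Pnorm P x)⁻¹ • x) ∈ {x : Fin 2 → ℝ | Pnorm P x = 1} := by
        simp only [Set.mem_setOf_eq, Pnorm_smul, abs_of_pos (inv_pos.2 hr)]
        exact inv_mul_cancel₀ (ne_of_gt hr)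
      have h2 := isMaxOn_iff.1 hmax _ hu
      rw [Matrix.mulVec_smul, Pnorm_smul, abs_of_pos (inv_pos.2 hr)] at h2
      calc Pnorm P ((S c * (S b * S a)) *ᵥ x)
          = (Pnorm P x) * ((Pnorm P x)⁻¹ * Pnorm P ((S c * (S b * S a)) *ᵥ x)) := by
            field_simp
        _ ≤ (Pnorm P x) * Pnorm P ((S c * (S b * S a)) *ᵥ zm) :=
            mul_le_mul_of_nonneg_left h2 (le_of_lt hr)
        _ = Pnorm P ((S c * (S b * S a)) *ᵥ zm) * Pnorm P x := mul_comm _ _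

lemma uniform_c (hP : P.PosDef) (hL : ∀ k, (P - (S k)ᵀ * P * (S k)).PosSemidef)
    (h0 : specRad (S 0) < 1) (h1 : specRad (S 1) < 1) (h01 : specRad (S 0 * S 1) < 1) :
    ∃ c : ℝ, 0 ≤ c ∧ c < 1 ∧
      ∀ a b cc : Fin 2, ∀ x, Pnorm P ((S cc * (S b * S a)) *ᵥ x) ≤ c * Pnorm P x := by
  have H : ∀ w : Fin 2 × Fin 2 × Fin 2, ∃ cw : ℝ, 0 ≤ cw ∧ cw < 1 ∧
      ∀ x, Pnorm P ((S w.2.2 * (S w.2.1 * S w.1)) *ᵥ x) ≤ cw * Pnorm P x := by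
    intro w
    exact word_bound hP hL h0 h1 h01 w.1 w.2.1 w.2.2
  choose f hf0 hf1 hf2 using H
  have hne : (Finset.univ : Finset (Fin 2 × Fin 2 × Fin 2)).Nonempty :=
    ⟨(0, 0, 0), Finset.mem_univ _⟩
  refine ⟨Finset.univ.sup' hne f, ?_, ?_, ?_⟩
  · exact le_trans (hf0 (0, 0, 0)) (Finset.le_sup' f (Finset.mem_univ _))
  · rw [Finset.sup'_lt_iff]
    intro w _
    exact hf1 w
  · intro a b cc x
    exact le_trans (hf2 (a, b, cc) x)
      (mul_le_mul_of_nonneg_right (Finset.le_sup' f (Finset.mem_univ _)) (Pnorm_nonneg _))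

end Compact

section Final

variable {P : Matrix (Fin 2) (Fin 2) ℝ} {S : Fin 2 → Matrix (Fin 2) (Fin 2) ℝ}

lemma prods_le (hP : P.PosDef) (hL : ∀ k, (P - (S k)ᵀ * P * (S k)).PosSemidef)
    (σ : ℕ → Fin 2) : ∀ n x, Pnorm P (prodsW S σ n *ᵥ x) ≤ Pnorm P x := by
  intro n
  induction n with
  | zero =>
    intro x
    simp [prodsW, Matrix.one_mulVec]
  | succ n ih =>
    intro x
    have h : prodsW S σ (n + 1) *ᵥ x = S (σ n) *ᵥ (prodsW S σ n *ᵥ x) := by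
      show (S (σ n) * prodsW S σ n) *ᵥ x = _
      rw [← Matrix.mulVec_mulVec]
    rw [h]
    exact le_trans (step_le hP (hL (σ n)) _) (ih x)

lemma decay (hP : P.PosDef) (hL : ∀ k, (P - (S k)ᵀ * P * (S k)).PosSemidef)
    (σ : ℕ → Fin 2) {c : ℝ} (c0 : 0 ≤ c)
    (hc : ∀ a b cc : Fin 2, ∀ x, Pnorm P ((S cc * (S b * S a)) *ᵥ x) ≤ c * Pnorm P x)
    (n : ℕ) : ∀ x, Pnorm P (prodsW S σ n *ᵥ x) ≤ c ^ (n / 3) * Pnorm P x := by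
  induction n using Nat.strong_induction_on with
  | _ n ih =>
    match n, ih with
    | 0, _ =>
      intro x
      simpa [prodsW, Matrix.one_mulVec] using le_refl (Pnorm P x)
    | 1, _ =>
      intro x
      have : (1 : ℕ) / 3 = 0 := by norm_num
      rw [this, pow_zero, one_mul]
      exact prods_le hP hL σ 1 x
    | 2, _ =>
      intro x
      have : (2 : ℕ) / 3 = 0 := by norm_num
      rw [this, pow_zero, one_mul]
      exact prods_le hP hL σ 2 x
    | (m + 3), ih =>
      intro x
      have hunf : prodsW S σ (m + 3)
          = S (σ (m + 2)) * (S (σ (m + 1)) * (S (σ m) * prodsW S σ m)) := rfl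
      have h3 : prodsW S σ (m + 3)
          = (S (σ (m + 2)) * (S (σ (m + 1)) * S (σ m))) * prodsW S σ m := by
        rw [hunf]
        simp only [mul_assoc]
      rw [h3, ← Matrix.mulVec_mulVec]
      calc Pnorm P ((S (σ (m + 2)) * (S (σ (m + 1)) * S (σ m))) *ᵥ (prodsW S σ m *ᵥ x))
          ≤ c * Pnorm P (prodsW S σ m *ᵥ x) := hc (σ m) (σ (m + 1)) (σ (m + 2)) _
        _ ≤ c * (c ^ (m / 3) * Pnorm P x) :=
            mul_le_mul_of_nonneg_left (ih m (by omega) x) c0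
        _ = c ^ ((m + 3) / 3) * Pnorm P x := by
            rw [Nat.add_div_right _ (by norm_num : 0 < 3), pow_succ]
            ring

lemma prodsW_const (S : Fin 2 → Matrix (Fin 2) (Fin 2) ℝ) (k : Fin 2) (n : ℕ) :
    prodsW S (fun _ => k) n = S k ^ n := by
  induction n with
  | zero => rfl
  | succ n ih =>
    show S k * prodsW S (fun _ => k) n = S k ^ (n + 1)
    rw [ih, ← pow_succ']

lemma prodsW_alt (S : Fin 2 → Matrix (Fin 2) (Fin 2) ℝ) (n : ℕ) :
    prodsW S (fun n => if n % 2 = 0 then 1 else 0) (2 * n) = (S 0 * S 1) ^ n := by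
  induction n with
  | zero => rfl
  | succ n ih =>
    have h1 : 2 * (n + 1) = (2 * n + 1) + 1 := by ring
    rw [h1]
    show S (if (2 * n + 1) % 2 = 0 then 1 else 0)
        * (S (if (2 * n) % 2 = 0 then 1 else 0) * prodsW S _ (2 * n)) = _
    have e1 : (2 * n + 1) % 2 = 1 := by omega
    have e2 : (2 * n) % 2 = 0 := by omega
    rw [e1, e2]
    simp only [if_true, if_false, one_ne_zero, reduceIte]
    rw [ih, ← mul_assoc, ← pow_succ']


theorem stmt14 (S : Fin 2 → Matrix (Fin 2) (Fin 2) ℝ)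
    (P : Matrix (Fin 2) (Fin 2) ℝ) (hP : P.PosDef)
    (hL : ∀ k, (P - (S k)ᵀ * P * S k).PosSemidef) :
    (∀ σ : ℕ → Fin 2, Tendsto (fun n => prodsW S σ n) atTop (nhds 0)) ↔
      (specRad (S 0) < 1 ∧ specRad (S 1) < 1 ∧ specRad (S 0 * S 1) < 1) := by
  constructor
  · intro h
    refine ⟨?_, ?_, ?_⟩
    · apply specRad_lt_one_of_pow
      have := h (fun _ => (0 : Fin 2))
      simpa only [prodsW_const] using this
    · apply specRad_lt_one_of_pow
      have := h (fun _ => (1 : Fin 2))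
      simpa only [prodsW_const] using this
    · apply specRad_lt_one_of_pow
      have hm : Tendsto (fun n : ℕ => 2 * n) atTop atTop :=
        tendsto_atTop_atTop.mpr (fun b => ⟨b, fun a ha => by omega⟩)
      have h2 := (h (fun n => if n % 2 = 0 then 1 else 0)).comp hm
      have h3 : (fun n : ℕ => prodsW S (fun n => if n % 2 = 0 then 1 else 0) (2 * n))
          = fun n : ℕ => (S 0 * S 1) ^ n := funext fun n => prodsW_alt S n
      rw [show ((fun n => prodsW S (fun n => if n % 2 = 0 then 1 else 0) n)
          ∘ (fun n : ℕ => 2 * n))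
          = fun n : ℕ => prodsW S (fun n => if n % 2 = 0 then 1 else 0) (2 * n) from rfl, h3] at h2
      exact h2
  · rintro ⟨h0, h1, h01⟩ σ
    obtain ⟨c, c0, c1, hc⟩ := uniform_c hP hL h0 h1 h01
    obtain ⟨ε, hε, hbound⟩ := exists_eps hP
    have hdecay := decay hP hL σ c0 hc
    have hnormle : ∀ v : Fin 2 → ℝ, ‖v‖ ≤ Real.sqrt (1 / ε) * Pnorm P v := by
      intro v
      have h1' : ε * ‖v‖ ^ 2 ≤ (Pnorm P v) ^ 2 := by
        rw [Pnorm_sq hP]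
        exact hbound v
      have h2' : ‖v‖ ^ 2 ≤ (Pnorm P v) ^ 2 / ε := (le_div_iff₀ hε).2 (by linarith [h1'])
      calc ‖v‖ = Real.sqrt (‖v‖ ^ 2) := (Real.sqrt_sq (norm_nonneg v)).symm
        _ ≤ Real.sqrt ((Pnorm P v) ^ 2 / ε) := Real.sqrt_le_sqrt h2'
        _ = Real.sqrt ((Pnorm P v) ^ 2 * (1 / ε)) := by rw [div_eq_mul_one_div]
        _ = Pnorm P v * Real.sqrt (1 / ε) := by
            rw [Real.sqrt_mul (sq_nonneg _), Real.sqrt_sq (Pnorm_nonneg v)]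
        _ = Real.sqrt (1 / ε) * Pnorm P v := mul_comm _ _
    apply tendsto_pi_nhds.2
    intro i
    apply tendsto_pi_nhds.2
    intro j
    have hentry : ∀ n, |prodsW S σ n i j|
        ≤ (Real.sqrt (1 / ε) * Pnorm P (Pi.single j 1)) * c ^ (n / 3) := by
      intro n
      have hcol : (prodsW S σ n *ᵥ Pi.single j 1) i = prodsW S σ n i j := by
        simp [Matrix.mulVec_single]
      calc |prodsW S σ n i j| = ‖(prodsW S σ n *ᵥ Pi.single j 1) i‖ := by
            rw [hcol, Real.norm_eq_abs]
        _ ≤ ‖prodsW S σ n *ᵥ Pi.single j 1‖ := norm_le_pi_norm _ i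
        _ ≤ Real.sqrt (1 / ε) * Pnorm P (prodsW S σ n *ᵥ Pi.single j 1) := hnormle _
        _ ≤ Real.sqrt (1 / ε) * (c ^ (n / 3) * Pnorm P (Pi.single j 1)) :=
            mul_le_mul_of_nonneg_left (hdecay n _) (Real.sqrt_nonneg _)
        _ = (Real.sqrt (1 / ε) * Pnorm P (Pi.single j 1)) * c ^ (n / 3) := by ring
    have hg : Tendsto (fun n : ℕ =>
        (Real.sqrt (1 / ε) * Pnorm P (Pi.single j 1)) * c ^ (n / 3)) atTop (nhds 0) := by
      have hpow : Tendsto (fun n : ℕ => c ^ n) atTop (nhds 0) :=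
        tendsto_pow_atTop_nhds_zero_of_lt_one c0 c1
      have hdiv : Tendsto (fun n : ℕ => n / 3) atTop atTop :=
        tendsto_atTop_atTop.mpr (fun b => ⟨3 * b, fun a ha => by omega⟩)
      have := (hpow.comp hdiv).const_mul (Real.sqrt (1 / ε) * Pnorm P (Pi.single j 1))
      simpa using this
    have hsq := squeeze_zero_norm (f := fun n => prodsW S σ n i j)
      (fun n => by simpa [Real.norm_eq_abs] using hentry n) hg
    simpa using hsq
end Final
end

section
/- Let S₁, S₂ ∈ ℝ^{2×2} with S₁ = √((3−√5)/2)·[[1,0],[1,1]] and S₂ = √((3−√5)/2)·[[1,1],[0,1]]. Then ‖S₁‖₂ = ‖S₂‖₂ = 1 (Euclidean operator norms), ρ(S₁) = ρ(S₂) = √((3−√5)/2) < 1, and ρ(S₁S₂) = 1. In particular, the switched system {S₁,S₂} is not absolutely stable even though both subsystems are Schur stable and share the common weak Lyapunov matrix P = I₂. -/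
open Matrix Filter
open scoped ENNReal

noncomputable def cgold : ℝ := Real.sqrt ((3 - Real.sqrt 5) / 2)

noncomputable def T1 : Matrix (Fin 2) (Fin 2) ℝ := cgold • !![1, 0; 1, 1]
noncomputable def T2 : Matrix (Fin 2) (Fin 2) ℝ := cgold • !![1, 1; 0, 1]

-- ### basic real facts
lemma s5_sq : Real.sqrt 5 ^ 2 = 5 := Real.sq_sqrt (by norm_num)
lemma s5_lt : Real.sqrt 5 < 3 := by nlinarith [s5_sq, Real.sqrt_nonneg 5]
lemma s5_gt : 2 < Real.sqrt 5 := by nlinarith [s5_sq, Real.sqrt_nonneg 5]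
lemma cgold_sq : cgold ^ 2 = (3 - Real.sqrt 5) / 2 := Real.sq_sqrt (by nlinarith [s5_lt])
lemma cgold_nonneg : 0 ≤ cgold := Real.sqrt_nonneg _
lemma cgold_lt_one : cgold < 1 := by nlinarith [cgold_sq, cgold_nonneg, s5_gt]

lemma key_ineq (a b : ℝ) : cgold ^ 2 * (2*a^2 + 2*a*b + b^2) ≤ a^2 + b^2 := by
  rw [cgold_sq]
  nlinarith [sq_nonneg ((Real.sqrt 5 - 2) * a - (3 - Real.sqrt 5)/2 * b), s5_sq, s5_gt]

-- ### mulVec computations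
lemma T1_mulVec (x : Fin 2 → ℝ) : T1 *ᵥ x = ![cgold * x 0, cgold * (x 0 + x 1)] := by
  funext i
  fin_cases i <;>
    simp [T1, Matrix.mulVec, dotProduct, Fin.sum_univ_two] <;> ring

lemma T2_mulVec (x : Fin 2 → ℝ) : T2 *ᵥ x = ![cgold * (x 0 + x 1), cgold * x 1] := by
  funext i
  fin_cases i <;>
    simp [T2, Matrix.mulVec, dotProduct, Fin.sum_univ_two] <;> ring

lemma Pnorm_one (x : Fin 2 → ℝ) : Pnorm 1 x = Real.sqrt (x 0 ^ 2 + x 1 ^ 2) := by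
  simp [Pnorm, Matrix.one_mulVec, dotProduct, Fin.sum_univ_two, sq]

-- ### extremal vector
noncomputable def aa : ℝ := Real.sqrt (2 / (5 - Real.sqrt 5))
noncomputable def bb : ℝ := (Real.sqrt 5 - 1) / 2 * aa

lemma aa_sq : aa ^ 2 = 2 / (5 - Real.sqrt 5) := by
  refine Real.sq_sqrt ?_
  have h : (0:ℝ) < 5 - Real.sqrt 5 := by nlinarith [s5_lt]
  positivity

lemma unit_aabb : aa ^ 2 + bb ^ 2 = 1 := by
  have h5 : (0:ℝ) < 5 - Real.sqrt 5 := by nlinarith [s5_lt]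
  have hb : bb ^ 2 = ((Real.sqrt 5 - 1)/2)^2 * aa ^ 2 := by rw [bb]; ring
  rw [hb, aa_sq]
  field_simp
  ring_nf
  nlinarith [s5_sq, s5_gt, s5_lt]

lemma T1_aabb : cgold ^ 2 * (2 * aa^2 + 2 * aa * bb + bb^2) = 1 := by
  have h5 : (0:ℝ) < 5 - Real.sqrt 5 := by nlinarith [s5_lt]
  have hb : bb ^ 2 = ((Real.sqrt 5 - 1)/2)^2 * aa ^ 2 := by rw [bb]; ring
  have hab : 2 * aa * bb = 2 * ((Real.sqrt 5 - 1)/2) * aa ^ 2 := by rw [bb]; ring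
  rw [hb, hab, cgold_sq, aa_sq]
  field_simp
  ring_nf
  nlinarith [s5_sq, s5_gt, s5_lt]

lemma popnorm_T1 : PopNorm 1 T1 = 1 := by
  have hgreat : IsGreatest ((fun x => Pnorm 1 (T1 *ᵥ x)) '' {x | Pnorm 1 x = 1}) 1 := by
    constructor
    · refine ⟨![aa, bb], ?_, ?_⟩
      · simp only [Set.mem_setOf_eq, Pnorm_one]
        simp [unit_aabb]
      · show Pnorm 1 (T1 *ᵥ ![aa, bb]) = 1
        rw [T1_mulVec, Pnorm_one]
        simp only [Matrix.cons_val_zero, Matrix.cons_val_one, Matrix.head_cons]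
        rw [show (cgold * aa)^2 + (cgold * (aa + bb))^2
            = cgold ^ 2 * (2*aa^2 + 2*aa*bb + bb^2) by ring, T1_aabb, Real.sqrt_one]
    · rintro y ⟨x, hx, rfl⟩
      simp only [Set.mem_setOf_eq, Pnorm_one] at hx
      have hx2 : x 0 ^ 2 + x 1 ^ 2 = 1 := by
        have := Real.sq_sqrt (show (0:ℝ) ≤ x 0 ^ 2 + x 1 ^ 2 by positivity)
        rw [hx] at this; linarith
      show Pnorm 1 (T1 *ᵥ x) ≤ 1
      rw [T1_mulVec, Pnorm_one]
      simp only [Matrix.cons_val_zero, Matrix.cons_val_one, Matrix.head_cons]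
      rw [show (cgold * x 0)^2 + (cgold * (x 0 + x 1))^2
          = cgold ^ 2 * (2*(x 0)^2 + 2*(x 0)*(x 1) + (x 1)^2) by ring]
      calc Real.sqrt _ ≤ Real.sqrt 1 := by
            apply Real.sqrt_le_sqrt
            rw [← hx2]; exact key_ineq _ _
        _ = 1 := Real.sqrt_one
  exact hgreat.csSup_eq

lemma popnorm_T2 : PopNorm 1 T2 = 1 := by
  have hgreat : IsGreatest ((fun x => Pnorm 1 (T2 *ᵥ x)) '' {x | Pnorm 1 x = 1}) 1 := by
    constructor
    · refine ⟨![bb, aa], ?_, ?_⟩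
      · simp only [Set.mem_setOf_eq, Pnorm_one]
        simp only [Matrix.cons_val_zero, Matrix.cons_val_one, Matrix.head_cons]
        rw [show bb ^ 2 + aa ^ 2 = aa ^ 2 + bb ^ 2 by ring, unit_aabb, Real.sqrt_one]
      · show Pnorm 1 (T2 *ᵥ ![bb, aa]) = 1
        rw [T2_mulVec, Pnorm_one]
        simp only [Matrix.cons_val_zero, Matrix.cons_val_one, Matrix.head_cons]
        rw [show (cgold * (bb + aa))^2 + (cgold * aa)^2
            = cgold ^ 2 * (2*aa^2 + 2*aa*bb + bb^2) by ring, T1_aabb, Real.sqrt_one]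
    · rintro y ⟨x, hx, rfl⟩
      simp only [Set.mem_setOf_eq, Pnorm_one] at hx
      have hx2 : x 0 ^ 2 + x 1 ^ 2 = 1 := by
        have := Real.sq_sqrt (show (0:ℝ) ≤ x 0 ^ 2 + x 1 ^ 2 by positivity)
        rw [hx] at this; linarith
      show Pnorm 1 (T2 *ᵥ x) ≤ 1
      rw [T2_mulVec, Pnorm_one]
      simp only [Matrix.cons_val_zero, Matrix.cons_val_one, Matrix.head_cons]
      rw [show (cgold * (x 0 + x 1))^2 + (cgold * x 1)^2
          = cgold ^ 2 * (2*(x 1)^2 + 2*(x 1)*(x 0) + (x 0)^2) by ring]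
      calc Real.sqrt _ ≤ Real.sqrt 1 := by
            apply Real.sqrt_le_sqrt
            rw [← hx2]
            have := key_ineq (x 1) (x 0)
            linarith
        _ = 1 := Real.sqrt_one
  exact hgreat.csSup_eq

lemma mem_spec (M : Matrix (Fin 2) (Fin 2) ℂ) (k : ℂ) :
    k ∈ spectrum ℂ M ↔ (k - M 0 0) * (k - M 1 1) - M 0 1 * M 1 0 = 0 := by
  rw [spectrum.mem_iff, Matrix.isUnit_iff_isUnit_det, isUnit_iff_ne_zero, not_ne_iff,
    Algebra.algebraMap_eq_smul_one, Matrix.det_fin_two]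
  simp [Matrix.smul_apply, Matrix.one_apply, Matrix.sub_apply]

lemma spec_T1 : spectrum ℂ (T1.map Complex.ofReal) = {(cgold : ℂ)} := by
  ext k
  rw [mem_spec]
  simp [T1, Matrix.map_apply, Matrix.smul_apply, mul_self_eq_zero, sub_eq_zero]

lemma spec_T2 : spectrum ℂ (T2.map Complex.ofReal) = {(cgold : ℂ)} := by
  ext k
  rw [mem_spec]
  simp [T2, Matrix.map_apply, Matrix.smul_apply, mul_self_eq_zero, sub_eq_zero]

lemma nnorm_cgold : (‖(cgold : ℂ)‖₊ : ℝ≥0∞) = ENNReal.ofReal cgold := by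
  rw [Complex.nnnorm_real]
  exact Real.enorm_eq_ofReal cgold_nonneg

lemma specRad_T1 : specRad T1 = ENNReal.ofReal cgold := by
  show spectralRadius ℂ (T1.map Complex.ofReal) = _
  rw [spectralRadius, spec_T1]
  simp only [iSup_singleton]
  exact nnorm_cgold

lemma specRad_T2 : specRad T2 = ENNReal.ofReal cgold := by
  show spectralRadius ℂ (T2.map Complex.ofReal) = _
  rw [spectralRadius, spec_T2]
  simp only [iSup_singleton]
  exact nnorm_cgold

lemma T1T2 : T1 * T2 = !![cgold^2, cgold^2; cgold^2, 2*cgold^2] := by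
  rw [T1, T2]
  ext i j
  fin_cases i <;> fin_cases j <;>
    simp [Matrix.mul_apply, Fin.sum_univ_two] <;> ring

lemma cgold_id : 3 * cgold ^ 2 = 1 + cgold ^ 4 := by
  have h1 := cgold_sq
  have h2 := s5_sq
  nlinarith [h1, h2]

lemma spec_T1T2 : spectrum ℂ ((T1 * T2).map Complex.ofReal)
    = {1, ((cgold : ℂ))^4} := by
  have hc : 3 * (cgold : ℂ) ^ 2 = 1 + (cgold : ℂ) ^ 4 := by
    exact_mod_cast congrArg (Complex.ofReal) cgold_id
  ext k
  rw [mem_spec, T1T2]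
  simp only [Matrix.map_apply, Matrix.cons_val', Matrix.cons_val_zero, Matrix.empty_val',
    Matrix.cons_val_fin_one, Matrix.cons_val_one, Matrix.head_cons, Matrix.head_fin_const,
    Matrix.of_apply, Matrix.head_cons]
  push_cast
  rw [show (k - (cgold:ℂ)^2) * (k - 2*(cgold:ℂ)^2) - (cgold:ℂ)^2 * (cgold:ℂ)^2
      = (k - 1) * (k - (cgold:ℂ)^4) by linear_combination (-k) * hc]
  rw [mul_eq_zero, sub_eq_zero, sub_eq_zero]
  simp [Set.mem_insert_iff]

lemma specRad_T1T2 : specRad (T1 * T2) = 1 := by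
  show spectralRadius ℂ ((T1 * T2).map Complex.ofReal) = 1
  rw [spectralRadius, spec_T1T2]
  rw [iSup_insert, iSup_singleton]
  have h1 : (‖(1:ℂ)‖₊ : ℝ≥0∞) = 1 := by simp
  have h2 : (‖((cgold:ℂ))^4‖₊ : ℝ≥0∞) ≤ 1 := by
    have : ((cgold:ℂ))^4 = ((cgold^4 : ℝ) : ℂ) := by push_cast; ring
    rw [this, Complex.nnnorm_real, (show ((‖(cgold^4:ℝ)‖₊ : ℝ≥0∞)) = ENNReal.ofReal (cgold^4) from
      Real.enorm_eq_ofReal (by positivity))]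
    exact ENNReal.ofReal_le_one.2 (pow_le_one₀ cgold_nonneg cgold_lt_one.le)
  rw [h1]
  exact sup_eq_left.2 h2


lemma gram_T1 : T1ᵀ * 1 * T1 = !![2*cgold^2, cgold^2; cgold^2, cgold^2] := by
  have hT : (!![1,0;1,1] : Matrix (Fin 2) (Fin 2) ℝ)ᵀ = !![1,1;0,1] := by
    ext i j; fin_cases i <;> fin_cases j <;> rfl
  rw [Matrix.mul_one, T1, Matrix.transpose_smul, hT]
  ext i j
  fin_cases i <;> fin_cases j <;>
    (simp [Matrix.mul_apply, Fin.sum_univ_two, Matrix.transpose_apply]; ring)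

lemma gram_T2 : T2ᵀ * 1 * T2 = !![cgold^2, cgold^2; cgold^2, 2*cgold^2] := by
  have hT : (!![1,1;0,1] : Matrix (Fin 2) (Fin 2) ℝ)ᵀ = !![1,0;1,1] := by
    ext i j; fin_cases i <;> fin_cases j <;> rfl
  rw [Matrix.mul_one, T2, Matrix.transpose_smul, hT]
  ext i j
  fin_cases i <;> fin_cases j <;>
    (simp [Matrix.mul_apply, Fin.sum_univ_two, Matrix.transpose_apply]; ring)

lemma psd_T1 : (1 - T1ᵀ * 1 * T1).PosSemidef := by
  rw [gram_T1]
  rw [Matrix.posSemidef_iff_dotProduct_mulVec]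
  constructor
  · show _ᴴ = _
    ext i j
    fin_cases i <;> fin_cases j <;>
      simp [Matrix.conjTranspose_apply, Matrix.one_apply, Matrix.sub_apply]
  · intro x
    have hk := key_ineq (x 0) (x 1)
    simp only [star_trivial]
    simp [Matrix.sub_mulVec, Matrix.one_mulVec, dotProduct, Matrix.mulVec,
      Fin.sum_univ_two]
    nlinarith [hk]

lemma psd_T2 : (1 - T2ᵀ * 1 * T2).PosSemidef := by
  rw [gram_T2]
  rw [Matrix.posSemidef_iff_dotProduct_mulVec]
  constructor
  · show _ᴴ = _
    ext i j
    fin_cases i <;> fin_cases j <;>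
      simp [Matrix.conjTranspose_apply, Matrix.one_apply, Matrix.sub_apply]
  · intro x
    have hk := key_ineq (x 1) (x 0)
    simp only [star_trivial]
    simp [Matrix.sub_mulVec, Matrix.one_mulVec, dotProduct, Matrix.mulVec,
      Fin.sum_univ_two]
    nlinarith [hk]

noncomputable def vv : Fin 2 → ℝ := ![(Real.sqrt 5 - 1)/2, (3 - Real.sqrt 5)/2]

lemma T2T1 : T2 * T1 = !![2*cgold^2, cgold^2; cgold^2, cgold^2] := by
  rw [T1, T2]
  ext i j
  fin_cases i <;> fin_cases j <;>
    (simp [Matrix.mul_apply, Fin.sum_univ_two]; ring)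

lemma M_fixes : (T2 * T1) *ᵥ vv = vv := by
  rw [T2T1]
  funext i
  have h1 := cgold_sq
  have h2 := s5_sq
  fin_cases i <;>
    (simp [vv, Matrix.mulVec, dotProduct, Fin.sum_univ_two]; nlinarith)

lemma Mpow_fixes (k : ℕ) : ((T2 * T1) ^ k) *ᵥ vv = vv := by
  induction k with
  | zero => simp
  | succ n ih => rw [pow_succ', ← Matrix.mulVec_mulVec, ih, M_fixes]

def sigma0 : ℕ → Fin 2 := fun n => ⟨n % 2, Nat.mod_lt _ (by norm_num)⟩

lemma prods_even (k : ℕ) : prodsW ![T1, T2] sigma0 (2 * k) = (T2 * T1) ^ k := by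
  induction k with
  | zero => simp [prodsW]
  | succ n ih =>
      have h1 : 2 * (n + 1) = (2 * n + 1) + 1 := by ring
      rw [h1]
      show ![T1, T2] (sigma0 (2*n+1)) * prodsW ![T1, T2] sigma0 (2*n+1) = _
      have h2 : prodsW ![T1, T2] sigma0 (2*n+1)
          = ![T1, T2] (sigma0 (2*n)) * prodsW ![T1, T2] sigma0 (2*n) := rfl
      have hs1 : sigma0 (2*n+1) = 1 := by
        simp [sigma0, Fin.ext_iff, Nat.add_mul_mod_self_left, Nat.mul_add_mod]
      have hs0 : sigma0 (2*n) = 0 := by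
        simp [sigma0, Fin.ext_iff, Nat.mul_mod_right]
      rw [h2, hs1, hs0, ih]
      rw [pow_succ', mul_assoc]
      norm_num

lemma not_stable :
    ¬ (∀ σ : ℕ → Fin 2, Tendsto (fun n => prodsW ![T1, T2] σ n) atTop (nhds 0)) := by
  intro h
  have h0 := h sigma0
  have h1 : Tendsto (fun k => prodsW ![T1, T2] sigma0 (2 * k)) atTop
      (nhds (0 : Matrix (Fin 2) (Fin 2) ℝ)) :=
    h0.comp (tendsto_atTop_atTop_of_monotone (fun a b hab => by omega)
      (fun b => ⟨b, by omega⟩))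
  have hcont : Continuous fun A : Matrix (Fin 2) (Fin 2) ℝ => A 0 0 * vv 0 + A 0 1 * vv 1 := by
    fun_prop
  have h2 : Tendsto (fun k => ((T2 * T1) ^ k *ᵥ vv) 0) atTop (nhds 0) := by
    have := (hcont.tendsto _).comp h1
    simp only [Function.comp_def, prods_even] at this
    convert this using 2 with k
    · simp [Matrix.mulVec, dotProduct, Fin.sum_univ_two]
    · simp
  simp only [Mpow_fixes] at h2
  have h3 : vv 0 = 0 := tendsto_nhds_unique tendsto_const_nhds h2
  have : vv 0 > 0 := by
    simp [vv]
    nlinarith [s5_gt]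
  linarith

theorem stmt16 :
    PopNorm 1 T1 = 1 ∧ PopNorm 1 T2 = 1 ∧
    specRad T1 = ENNReal.ofReal cgold ∧ specRad T2 = ENNReal.ofReal cgold ∧
    ENNReal.ofReal cgold < 1 ∧
    specRad (T1 * T2) = 1 ∧
    ((1 - T1ᵀ * 1 * T1).PosSemidef ∧ (1 - T2ᵀ * 1 * T2).PosSemidef) ∧
    ¬ (∀ σ : ℕ → Fin 2, Tendsto (fun n => prodsW ![T1, T2] σ n) atTop (nhds 0)) :=
  ⟨popnorm_T1, popnorm_T2, specRad_T1, specRad_T2,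
    ENNReal.ofReal_lt_one.2 cgold_lt_one, specRad_T1T2, ⟨psd_T1, psd_T2⟩, not_stable⟩
end

section
/- Let S₁, S₂ ∈ ℝ^{d×d} satisfy P - S_kᵀPS_k ≥ 0 (k = 1,2) for a common symmetric positive-definite P, with ‖S₁‖_P = ‖S₂‖_P = 1, and suppose K_P(S₁) ∩ K_P(S₂) = {0}, where K_P(S) = {x : ‖Sx‖_P = ‖x‖_P}. If additionally K_P(S₁) is S₁-invariant (or K_P(S₂) is S₂-invariant), then for every switching signal σ : ℕ → {1,2} in which both symbols occur infinitely often, S_{σ(n)}⋯S_{σ(1)}x₀ → 0 for every x₀ ∈ ℝ^d. -/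
open Matrix Filter
open scoped ENNReal

section AuxStmt18

variable {d : ℕ} {P : Matrix (Fin d) (Fin d) ℝ}

lemma pn_cont (P : Matrix (Fin d) (Fin d) ℝ) : Continuous (Pnorm P) := by
  apply Real.continuous_sqrt.comp
  unfold dotProduct Matrix.mulVec dotProduct
  fun_prop

lemma mulVec_cont (A : Matrix (Fin d) (Fin d) ℝ) :
    Continuous (fun v : Fin d → ℝ => A.mulVec v) := by
  unfold Matrix.mulVec dotProduct
  fun_prop

lemma pn_pos (hP : P.PosDef) {x : Fin d → ℝ} (hx : x ≠ 0) : 0 < Pnorm P x := by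
  apply Real.sqrt_pos.2
  have := hP.re_dotProduct_pos hx
  simpa using this

lemma pn_smul (P : Matrix (Fin d) (Fin d) ℝ) (r : ℝ) (x : Fin d → ℝ) :
    Pnorm P (r • x) = |r| * Pnorm P x := by
  unfold Pnorm
  rw [Matrix.mulVec_smul, dotProduct_smul, smul_dotProduct]
  rw [smul_eq_mul, smul_eq_mul, ← mul_assoc, ← Real.sqrt_sq_eq_abs,
    ← Real.sqrt_mul (by positivity)]
  ring_nf

lemma pn_contr {A : Matrix (Fin d) (Fin d) ℝ} (h : (P - Aᵀ * P * A).PosSemidef)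
    (x : Fin d → ℝ) : Pnorm P (A.mulVec x) ≤ Pnorm P x := by
  apply Real.sqrt_le_sqrt
  have := h.re_dotProduct_nonneg x
  simp only [star_trivial, Matrix.sub_mulVec, dotProduct_sub] at this
  have h2 : x ⬝ᵥ (Aᵀ * P * A).mulVec x = (A.mulVec x) ⬝ᵥ P.mulVec (A.mulVec x) := by
    rw [← Matrix.mulVec_mulVec, ← Matrix.mulVec_mulVec, Matrix.dotProduct_mulVec,
      Matrix.vecMul_transpose]
  simp at this
  linarith [this]

lemma pn_lower (hP : P.PosDef) : ∃ c > 0, ∀ v : Fin d → ℝ, c * ‖v‖ ≤ Pnorm P v := by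
  rcases Nat.eq_zero_or_pos d with hd | hd
  · refine ⟨1, one_pos, fun v => ?_⟩
    subst hd
    have : v = 0 := Subsingleton.elim _ _
    simp [this, Pnorm]
  · have hsph : (Metric.sphere (0 : Fin d → ℝ) 1).Nonempty := by
      refine ⟨(fun _ => 1 : Fin d → ℝ), ?_⟩
      simp only [Metric.mem_sphere, dist_zero_right]
      have : Nonempty (Fin d) := ⟨⟨0, hd⟩⟩
      have : Nonempty (Fin d) := ⟨⟨0, hd⟩⟩
      simpa using (pi_norm_const (1:ℝ))
    obtain ⟨v₀, hv₀, hmin⟩ := (isCompact_sphere (0 : Fin d → ℝ) 1).exists_isMinOn hsph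
      (pn_cont P).continuousOn
    have hv₀n : ‖v₀‖ = 1 := by simpa using hv₀
    have hv₀0 : v₀ ≠ 0 := by intro h; rw [h] at hv₀n; simp at hv₀n
    refine ⟨Pnorm P v₀, pn_pos hP hv₀0, fun v => ?_⟩
    rcases eq_or_ne v 0 with rfl | hv
    · rw [norm_zero, mul_zero]
      exact Real.sqrt_nonneg _
    · have hvn : (0:ℝ) < ‖v‖ := norm_pos_iff.2 hv
      have hmem : ‖v‖⁻¹ • v ∈ Metric.sphere (0 : Fin d → ℝ) 1 := by
        simp [norm_smul, abs_of_pos (inv_pos.2 hvn), inv_mul_cancel₀ hvn.ne']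
      have h2 : Pnorm P v₀ ≤ Pnorm P (‖v‖⁻¹ • v) := hmin hmem
      rw [pn_smul, abs_of_pos (inv_pos.2 hvn)] at h2
      calc Pnorm P v₀ * ‖v‖ ≤ ‖v‖⁻¹ * Pnorm P v * ‖v‖ := by nlinarith [h2]
        _ = Pnorm P v := by field_simp

set_option maxHeartbeats 1000000 in
lemma aux_main (S : Fin 2 → Matrix (Fin d) (Fin d) ℝ) (hP : P.PosDef)
    (hcontr : ∀ k (v : Fin d → ℝ), Pnorm P ((S k).mulVec v) ≤ Pnorm P v)
    (a b : Fin 2) (hab : a ≠ b)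
    (hkey : ∀ v : Fin d → ℝ, Pnorm P ((S a).mulVec v) = Pnorm P v →
      Pnorm P ((S b).mulVec ((S a).mulVec v)) = Pnorm P ((S a).mulVec v) →
      (S a).mulVec v = 0)
    (σ : ℕ → Fin 2) (hσ : ∀ k : Fin 2, ∀ N : ℕ, ∃ n : ℕ, N ≤ n ∧ σ n = k)
    (x₀ : Fin d → ℝ) :
    Tendsto (fun n => (prodsW S σ n).mulVec x₀) atTop (nhds 0) := by
  set x : ℕ → Fin d → ℝ := fun n => (prodsW S σ n).mulVec x₀ with hx
  have hstep : ∀ n, x (n + 1) = (S (σ n)).mulVec (x n) := by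
    intro n
    simp only [hx, prodsW, Matrix.mulVec_mulVec]
  have hx0 : x 0 = x₀ := by simp [hx, prodsW]
  have hanti : Antitone fun n => Pnorm P (x n) := by
    apply antitone_nat_of_succ_le
    intro n
    rw [hstep n]
    exact hcontr _ _
  have hbdd : BddBelow (Set.range fun n => Pnorm P (x n)) := by
    refine ⟨0, fun r hr => ?_⟩
    obtain ⟨n, rfl⟩ := hr
    exact Real.sqrt_nonneg _
  set L := ⨅ n, Pnorm P (x n) with hLdef
  have hLlim : Tendsto (fun n => Pnorm P (x n)) atTop (nhds L) :=
    tendsto_atTop_ciInf hanti hbdd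
  -- pattern extraction
  have fin2 : ∀ i a b : Fin 2, a ≠ b → i ≠ b → i = a := by decide
  have hpat : ∀ N, ∃ n, N ≤ n ∧ σ n = a ∧ σ (n + 1) = b := by
    intro N
    by_contra h
    push_neg at h
    obtain ⟨n, hn, hna⟩ := hσ a N
    have hall : ∀ m, n ≤ m → σ m = a := by
      intro m hm
      induction m with
      | zero =>
        have : n = 0 := Nat.le_zero.mp hm
        exact this ▸ hna
      | succ m ih =>
        rcases Nat.lt_or_ge n (m + 1) with h1 | h1
        · have hm' : n ≤ m := Nat.lt_succ_iff.mp h1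
          have hma := ih hm'
          have := h m (le_trans hn hm') hma
          exact fin2 _ _ _ hab this
        · have : n = m + 1 := le_antisymm hm h1
          exact this ▸ hna
    obtain ⟨m, hm, hmb⟩ := hσ b n
    rw [hall m hm] at hmb
    exact hab hmb
  obtain ⟨φ, hφ, hφpat⟩ := extraction_of_frequently_atTop (frequently_atTop.2 hpat)
  -- boundedness and convergent subsequence
  obtain ⟨c, hc, hclb⟩ := pn_lower hP
  have hnb : ∀ n, x n ∈ Metric.closedBall (0 : Fin d → ℝ) (c⁻¹ * Pnorm P x₀) := by
    intro n
    rw [Metric.mem_closedBall, dist_zero_right]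
    have h1 : c * ‖x n‖ ≤ Pnorm P (x n) := hclb _
    have h2 : Pnorm P (x n) ≤ Pnorm P x₀ := by
      have h := hanti (Nat.zero_le n)
      simp only at h
      rwa [hx0] at h
    calc ‖x n‖ = c⁻¹ * (c * ‖x n‖) := by field_simp
      _ ≤ c⁻¹ * Pnorm P x₀ := by
          apply mul_le_mul_of_nonneg_left (le_trans h1 h2) (le_of_lt (inv_pos.2 hc))
  obtain ⟨y, -, ψ, hψ, hxy⟩ := tendsto_subseq_of_bounded Metric.isBounded_closedBall
    (fun i => hnb (φ i))
  set τ : ℕ → ℕ := φ ∘ ψ with hτdef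
  have hτ : StrictMono τ := hφ.comp hψ
  have hτa : ∀ i, σ (τ i) = a := fun i => (hφpat (ψ i)).1
  have hτb : ∀ i, σ (τ i + 1) = b := fun i => (hφpat (ψ i)).2
  have hxyτ : Tendsto (fun i => x (τ i)) atTop (nhds y) := hxy
  have hLy : Pnorm P y = L :=
    tendsto_nhds_unique (((pn_cont P).tendsto y).comp hxyτ) (hLlim.comp hτ.tendsto_atTop)
  have heq1 : (fun i => x (τ i + 1)) = fun i => (S a).mulVec (x (τ i)) := by
    funext i; rw [hstep, hτa]
  have h1lim : Tendsto (fun i => x (τ i + 1)) atTop (nhds ((S a).mulVec y)) := by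
    rw [heq1]; exact ((mulVec_cont (S a)).tendsto y).comp hxyτ
  have hτ1 : Tendsto (fun i => τ i + 1) atTop atTop :=
    tendsto_atTop_mono (fun i => Nat.le_succ (τ i)) hτ.tendsto_atTop
  have hLSa : Pnorm P ((S a).mulVec y) = L :=
    tendsto_nhds_unique (((pn_cont P).tendsto _).comp h1lim) (hLlim.comp hτ1)
  have heq2 : (fun i => x (τ i + 2)) = fun i => (S b).mulVec (x (τ i + 1)) := by
    funext i
    have : τ i + 2 = (τ i + 1) + 1 := rfl
    rw [this, hstep, hτb]
  have h2lim : Tendsto (fun i => x (τ i + 2)) atTop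
      (nhds ((S b).mulVec ((S a).mulVec y))) := by
    rw [heq2]; exact ((mulVec_cont (S b)).tendsto _).comp h1lim
  have hτ2 : Tendsto (fun i => τ i + 2) atTop atTop :=
    tendsto_atTop_mono (fun i => by omega) hτ.tendsto_atTop
  have hLSb : Pnorm P ((S b).mulVec ((S a).mulVec y)) = L :=
    tendsto_nhds_unique (((pn_cont P).tendsto _).comp h2lim) (hLlim.comp hτ2)
  have hzero : (S a).mulVec y = 0 := hkey y (by rw [hLSa, hLy]) (by rw [hLSb, hLSa])
  have hL0 : L = 0 := by
    rw [← hLSa, hzero]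
    simp [Pnorm]
  rw [hL0] at hLlim
  rw [tendsto_zero_iff_norm_tendsto_zero]
  have hub : Tendsto (fun n => c⁻¹ * Pnorm P (x n)) atTop (nhds 0) := by
    have := hLlim.const_mul c⁻¹
    simpa using this
  refine squeeze_zero (fun n => norm_nonneg _) (fun n => ?_) hub
  have h1 : c * ‖x n‖ ≤ Pnorm P (x n) := hclb _
  calc ‖x n‖ = c⁻¹ * (c * ‖x n‖) := by field_simp
    _ ≤ c⁻¹ * Pnorm P (x n) := mul_le_mul_of_nonneg_left h1 (le_of_lt (inv_pos.2 hc))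

end AuxStmt18

theorem stmt18 {d : ℕ} (S : Fin 2 → Matrix (Fin d) (Fin d) ℝ)
    (P : Matrix (Fin d) (Fin d) ℝ) (hP : P.PosDef)
    (hL : ∀ k, (P - (S k)ᵀ * P * S k).PosSemidef)
    (hop : PopNorm P (S 0) = 1 ∧ PopNorm P (S 1) = 1)
    (hcap : {x : Fin d → ℝ | Pnorm P ((S 0).mulVec x) = Pnorm P x} ∩
        {x : Fin d → ℝ | Pnorm P ((S 1).mulVec x) = Pnorm P x} = {0})
    (hinv : (∀ x : Fin d → ℝ, Pnorm P ((S 0).mulVec x) = Pnorm P x →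
        Pnorm P ((S 0).mulVec ((S 0).mulVec x)) = Pnorm P ((S 0).mulVec x)) ∨
      (∀ x : Fin d → ℝ, Pnorm P ((S 1).mulVec x) = Pnorm P x →
        Pnorm P ((S 1).mulVec ((S 1).mulVec x)) = Pnorm P ((S 1).mulVec x))) :
    ∀ σ : ℕ → Fin 2, (∀ k : Fin 2, ∀ N : ℕ, ∃ n : ℕ, N ≤ n ∧ σ n = k) →
      ∀ x₀ : Fin d → ℝ,
        Tendsto (fun n => (prodsW S σ n).mulVec x₀) atTop (nhds 0) := by
  have hcontr : ∀ k (v : Fin d → ℝ), Pnorm P ((S k).mulVec v) ≤ Pnorm P v :=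
    fun k v => pn_contr (hL k) v
  intro σ hσ x₀
  rcases hinv with h0 | h1
  · refine aux_main S hP hcontr 0 1 (by decide) ?_ σ hσ x₀
    intro v hva hvb
    have hmem : (S 0).mulVec v ∈ ({x : Fin d → ℝ | Pnorm P ((S 0).mulVec x) = Pnorm P x} ∩
        {x : Fin d → ℝ | Pnorm P ((S 1).mulVec x) = Pnorm P x}) := ⟨h0 v hva, hvb⟩
    rw [hcap] at hmem
    exact hmem
  · refine aux_main S hP hcontr 1 0 (by decide) ?_ σ hσ x₀
    intro v hva hvb
    have hmem : (S 1).mulVec v ∈ ({x : Fin d → ℝ | Pnorm P ((S 0).mulVec x) = Pnorm P x} ∩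
        {x : Fin d → ℝ | Pnorm P ((S 1).mulVec x) = Pnorm P x}) := ⟨hvb, h1 v hva⟩
    rw [hcap] at hmem
    exact hmem
end
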